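/- Let G be a cograph that is in-partitionable and such that every proper induced subgraph of G is partitionable. If G has a universal vertex v such that the graph G \ v obtained by deleting v is disconnected, then G contains one of the following graphs as an induced subgraph: H9 = K1 ⊕ (K3 ∪ (C4 ⊕ K1)), H10 = K1 ⊕ (K3 ∪ (K1 ⊕ (P3 ∪ K2))), H11 = K1 ⊕ (K3 ∪ (K2 ⊕ 2K2)), H12 = K1 ⊕ (K3 ∪ ((K2 ∪ K1) ⊕ (K2 ∪ K1))). -/

import Mathlib

open SimpleGraph

/-- The disjoint union `G ∪ H` of two vertex-disjoint graphs. -/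
def gUnion {α β : Type*} (G : SimpleGraph α) (H : SimpleGraph β) : SimpleGraph (α ⊕ β) where
  Adj x y :=
    match x, y with
    | Sum.inl a, Sum.inl b => G.Adj a b
    | Sum.inr a, Sum.inr b => H.Adj a b
    | _, _ => False
  symm := by refine ⟨?_⟩; rintro (a | a) (b | b) h
             · exact G.symm.symm _ _ h
             · exact h.elim
             · exact h.elim
             · exact H.symm.symm _ _ h
  loopless := by refine ⟨?_⟩; rintro (a | a) h
                 · exact G.loopless.irrefl a h
                 · exact H.loopless.irrefl a h

/-- The join `G ⊕ H` of two vertex-disjoint graphs: disjoint union plus all edges across. -/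
def gJoin {α β : Type*} (G : SimpleGraph α) (H : SimpleGraph β) : SimpleGraph (α ⊕ β) where
  Adj x y :=
    match x, y with
    | Sum.inl a, Sum.inl b => G.Adj a b
    | Sum.inr a, Sum.inr b => H.Adj a b
    | _, _ => True
  symm := by refine ⟨?_⟩; rintro (a | a) (b | b) h
             · exact G.symm.symm _ _ h
             · trivial
             · trivial
             · exact H.symm.symm _ _ h
  loopless := by refine ⟨?_⟩; rintro (a | a) h
                 · exact G.loopless.irrefl a h
                 · exact H.loopless.irrefl a h

/-- The complete graph `Kₙ`. -/
def KG (n : ℕ) : SimpleGraph (Fin n) := ⊤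

/-- The edgeless graph `nK₁` on `n` vertices. -/
def EG (n : ℕ) : SimpleGraph (Fin n) := ⊥

/-- `G` contains `H`, i.e. `H` is isomorphic to an induced subgraph of `G`. -/
def Contains {α β : Type*} (G : SimpleGraph α) (H : SimpleGraph β) : Prop :=
  Nonempty (H ↪g G)

/-- A cograph is a `P₄`-free graph. -/
def IsCograph {α : Type*} (G : SimpleGraph α) : Prop :=
  ¬ Contains G (pathGraph 4)

/-- `G` is partitionable: its vertex set splits into a part inducing a triangle-free
graph and a part inducing a `P₃`-free graph. -/
def Partitionable {α : Type*} (G : SimpleGraph α) : Prop :=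
  ∃ A : Set α, (G.induce A).CliqueFree 3 ∧ ¬ Contains (G.induce Aᶜ) (pathGraph 3)

/-- `G` is monopolar: its vertex set splits into an independent set and a part
inducing a `P₃`-free graph. -/
def Monopolar {α : Type*} (G : SimpleGraph α) : Prop :=
  ∃ A : Set α, (G.induce A).CliqueFree 2 ∧ ¬ Contains (G.induce Aᶜ) (pathGraph 3)

/-- `G` is (1,2)-partitionable: its vertex set can be partitioned into at most one
clique and at most two independent sets (equivalently, covered by them). -/
def OneTwoPartitionable {α : Type*} (G : SimpleGraph α) : Prop :=
  ∃ C S₁ S₂ : Set α, C ∪ S₁ ∪ S₂ = Set.univ ∧ G.IsClique C ∧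
    (G.induce S₁).CliqueFree 2 ∧ (G.induce S₂).CliqueFree 2

/-- A threshold graph is a `(2K₂, C₄, P₄)`-free graph. -/
def IsThreshold {α : Type*} (G : SimpleGraph α) : Prop :=
  ¬ Contains G (gUnion (KG 2) (KG 2)) ∧ ¬ Contains G (cycleGraph 4) ∧
    ¬ Contains G (pathGraph 4)

/-- The diamond `K₂ ⊕ 2K₁`. -/
def diamond := gJoin (KG 2) (EG 2)

/-- The paw `K₁ ⊕ (K₁ ∪ K₂)`. -/
def paw := gJoin (KG 1) (gUnion (KG 1) (KG 2))

/-- The butterfly `K₁ ⊕ 2K₂`. -/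
def butterfly := gJoin (KG 1) (gUnion (KG 2) (KG 2))

def twoK2 := gUnion (KG 2) (KG 2)

def twoK3 := gUnion (KG 3) (KG 3)

def K2uK1 := gUnion (KG 2) (KG 1)


def H1 := gJoin (EG 2) (gJoin (EG 2) (gJoin (EG 2) (KG 1)))
def H2 := gJoin (pathGraph 3) (gJoin (KG 1) twoK2)
def H3 := gJoin (EG 2) (gJoin K2uK1 K2uK1)
def H4 := gJoin (pathGraph 3) (gUnion (KG 2) (pathGraph 3))
def H5 := gJoin K2uK1 (gJoin (KG 1) twoK2)
def H6 := gJoin K2uK1 (gUnion (KG 3) (pathGraph 3))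
def H7 := gJoin K2uK1 (gUnion (KG 2) (gJoin (pathGraph 3) (KG 1)))
def H8 := gJoin K2uK1 (gUnion (KG 2) (gJoin (KG 1) K2uK1))
def H9 := gJoin (KG 1) (gUnion (KG 3) (gJoin (cycleGraph 4) (KG 1)))
def H10 := gJoin (KG 1) (gUnion (KG 3) (gJoin (KG 1) (gUnion (pathGraph 3) (KG 2))))
def H11 := gJoin (KG 1) (gUnion (KG 3) (gJoin (KG 2) twoK2))
def H12 := gJoin (KG 1) (gUnion (KG 3) (gJoin K2uK1 K2uK1))
def H13 := gJoin (KG 2) (gUnion (pathGraph 3) twoK3)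
def H14 := gJoin (KG 2) (gUnion (KG 3) (gJoin (pathGraph 3) (KG 1)))
def H15 := gJoin (KG 2) (gUnion (KG 3) (gJoin (KG 1) (gUnion (KG 1) (KG 2))))
def H16 := gJoin (gUnion (KG 3) (KG 2)) (gUnion (KG 3) (KG 1))
def H17 := gJoin (KG 3) twoK3

namespace Aux


variable {α : Type*} (G : SimpleGraph α)

/-- No induced P4 (with explicit distinctness). -/
def P4F : Prop := ∀ a b c d : α, G.Adj a b → G.Adj b c → G.Adj c d →
  ¬ G.Adj a c → ¬ G.Adj b d → ¬ G.Adj a d → a ≠ c → b ≠ d → a ≠ d → False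

def IndepOn (S : Set α) : Prop := ∀ ⦃x⦄, x ∈ S → ∀ ⦃y⦄, y ∈ S → ¬ G.Adj x y
def CliqueOn (S : Set α) : Prop := ∀ ⦃x⦄, x ∈ S → ∀ ⦃y⦄, y ∈ S → x ≠ y → G.Adj x y
def ClustOn (S : Set α) : Prop := ∀ ⦃x⦄, x ∈ S → ∀ ⦃y⦄, y ∈ S → ∀ ⦃z⦄, z ∈ S →
  G.Adj x y → G.Adj y z → x ≠ z → G.Adj x z
def TFOn (S : Set α) : Prop := ∀ ⦃x⦄, x ∈ S → ∀ ⦃y⦄, y ∈ S → ∀ ⦃z⦄, z ∈ S →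
  G.Adj x y → G.Adj y z → G.Adj x z → False
def MonoOn (S : Set α) : Prop := ∃ A ⊆ S, IndepOn G A ∧ ClustOn G (S \ A)
def SplitOn (S : Set α) : Prop := ∃ A ⊆ S, IndepOn G A ∧ CliqueOn G (S \ A)

/-- induced P3 with middle y -/
def HasP3 (S : Set α) : Prop := ∃ x ∈ S, ∃ y ∈ S, ∃ z ∈ S,
  G.Adj x y ∧ G.Adj y z ∧ ¬ G.Adj x z ∧ x ≠ z
def Has2K1 (S : Set α) : Prop := ∃ x ∈ S, ∃ y ∈ S, x ≠ y ∧ ¬ G.Adj x y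
def HasK2 (S : Set α) : Prop := ∃ x ∈ S, ∃ y ∈ S, G.Adj x y
def Has2K2 (S : Set α) : Prop := ∃ a ∈ S, ∃ b ∈ S, ∃ c ∈ S, ∃ d ∈ S,
  G.Adj a b ∧ G.Adj c d ∧ ¬ G.Adj a c ∧ ¬ G.Adj a d ∧ ¬ G.Adj b c ∧ ¬ G.Adj b d ∧
  a ≠ c ∧ a ≠ d ∧ b ≠ c ∧ b ≠ d
def HasC4 (S : Set α) : Prop := ∃ a ∈ S, ∃ b ∈ S, ∃ c ∈ S, ∃ d ∈ S,
  G.Adj a b ∧ G.Adj b c ∧ G.Adj c d ∧ G.Adj d a ∧ ¬ G.Adj a c ∧ ¬ G.Adj b d ∧ a ≠ c ∧ b ≠ d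
def HasK2K1 (S : Set α) : Prop := ∃ a ∈ S, ∃ b ∈ S, ∃ c ∈ S,
  G.Adj a b ∧ ¬ G.Adj a c ∧ ¬ G.Adj b c ∧ a ≠ c ∧ b ≠ c
def HasP3K2 (S : Set α) : Prop := ∃ x ∈ S, ∃ y ∈ S, ∃ z ∈ S, ∃ e ∈ S, ∃ f ∈ S,
  G.Adj x y ∧ G.Adj y z ∧ ¬ G.Adj x z ∧ x ≠ z ∧ G.Adj e f ∧
  ¬ G.Adj x e ∧ ¬ G.Adj x f ∧ ¬ G.Adj y e ∧ ¬ G.Adj y f ∧ ¬ G.Adj z e ∧ ¬ G.Adj z f ∧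
  x ≠ e ∧ x ≠ f ∧ y ≠ e ∧ y ≠ f ∧ z ≠ e ∧ z ≠ f
def HasBfly (S : Set α) : Prop := ∃ h ∈ S, ∃ a ∈ S, ∃ b ∈ S, ∃ c ∈ S, ∃ d ∈ S,
  G.Adj a b ∧ G.Adj c d ∧ ¬ G.Adj a c ∧ ¬ G.Adj a d ∧ ¬ G.Adj b c ∧ ¬ G.Adj b d ∧
  a ≠ c ∧ a ≠ d ∧ b ≠ c ∧ b ≠ d ∧ G.Adj h a ∧ G.Adj h b ∧ G.Adj h c ∧ G.Adj h d
def HasX9 (S : Set α) : Prop := ∃ h ∈ S, ∃ a ∈ S, ∃ b ∈ S, ∃ c ∈ S, ∃ d ∈ S,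
  G.Adj a b ∧ G.Adj b c ∧ G.Adj c d ∧ G.Adj d a ∧ ¬ G.Adj a c ∧ ¬ G.Adj b d ∧ a ≠ c ∧ b ≠ d ∧
  G.Adj h a ∧ G.Adj h b ∧ G.Adj h c ∧ G.Adj h d
def HasX10 (S : Set α) : Prop := ∃ h ∈ S, ∃ x ∈ S, ∃ y ∈ S, ∃ z ∈ S, ∃ e ∈ S, ∃ f ∈ S,
  G.Adj x y ∧ G.Adj y z ∧ ¬ G.Adj x z ∧ x ≠ z ∧ G.Adj e f ∧
  ¬ G.Adj x e ∧ ¬ G.Adj x f ∧ ¬ G.Adj y e ∧ ¬ G.Adj y f ∧ ¬ G.Adj z e ∧ ¬ G.Adj z f ∧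
  x ≠ e ∧ x ≠ f ∧ y ≠ e ∧ y ≠ f ∧ z ≠ e ∧ z ≠ f ∧
  G.Adj h x ∧ G.Adj h y ∧ G.Adj h z ∧ G.Adj h e ∧ G.Adj h f
def HasX11 (S : Set α) : Prop := ∃ p ∈ S, ∃ q ∈ S, ∃ a ∈ S, ∃ b ∈ S, ∃ c ∈ S, ∃ d ∈ S,
  G.Adj p q ∧ G.Adj a b ∧ G.Adj c d ∧ ¬ G.Adj a c ∧ ¬ G.Adj a d ∧ ¬ G.Adj b c ∧ ¬ G.Adj b d ∧
  a ≠ c ∧ a ≠ d ∧ b ≠ c ∧ b ≠ d ∧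
  G.Adj p a ∧ G.Adj p b ∧ G.Adj p c ∧ G.Adj p d ∧ G.Adj q a ∧ G.Adj q b ∧ G.Adj q c ∧ G.Adj q d
def HasX12 (S : Set α) : Prop := ∃ a ∈ S, ∃ b ∈ S, ∃ c ∈ S, ∃ d ∈ S, ∃ e ∈ S, ∃ f ∈ S,
  G.Adj a b ∧ ¬ G.Adj a c ∧ ¬ G.Adj b c ∧ a ≠ c ∧ b ≠ c ∧
  G.Adj d e ∧ ¬ G.Adj d f ∧ ¬ G.Adj e f ∧ d ≠ f ∧ e ≠ f ∧
  G.Adj a d ∧ G.Adj a e ∧ G.Adj a f ∧ G.Adj b d ∧ G.Adj b e ∧ G.Adj b f ∧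
  G.Adj c d ∧ G.Adj c e ∧ G.Adj c f

def Step (S : Set α) (x y : α) : Prop := x ∈ S ∧ y ∈ S ∧ G.Adj x y
def CoStep (S : Set α) (x y : α) : Prop := x ∈ S ∧ y ∈ S ∧ x ≠ y ∧ ¬ G.Adj x y
def Reach (S : Set α) : α → α → Prop := Relation.ReflTransGen (Step G S)
def CoReach (S : Set α) : α → α → Prop := Relation.ReflTransGen (CoStep G S)
def ConnOn (S : Set α) : Prop := ∀ ⦃x⦄, x ∈ S → ∀ ⦃y⦄, y ∈ S → Reach G S x y
def CoConnOn (S : Set α) : Prop := ∀ ⦃x⦄, x ∈ S → ∀ ⦃y⦄, y ∈ S → CoReach G S x y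

variable {G}

theorem step_symm {S : Set α} : Symmetric (Step G S) :=
  fun _ _ ⟨hx, hy, ha⟩ => ⟨hy, hx, ha.symm⟩
theorem costep_symm {S : Set α} : Symmetric (CoStep G S) :=
  fun _ _ ⟨hx, hy, hne, ha⟩ => ⟨hy, hx, hne.symm, fun h => ha h.symm⟩
theorem reach_symm {S : Set α} {x y : α} (h : Reach G S x y) : Reach G S y x :=
  by haveI : Std.Symm (Step G S) := ⟨fun _ _ h => step_symm h⟩; exact Std.Symm.symm (r := Relation.ReflTransGen (Step G S)) _ _ h
theorem coreach_symm {S : Set α} {x y : α} (h : CoReach G S x y) : CoReach G S y x :=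
  by haveI : Std.Symm (CoStep G S) := ⟨fun _ _ h => costep_symm h⟩; exact Std.Symm.symm (r := Relation.ReflTransGen (CoStep G S)) _ _ h
theorem reach_trans {S : Set α} {x y z : α} (h : Reach G S x y) (h' : Reach G S y z) :
    Reach G S x z := h.trans h'
theorem coreach_trans {S : Set α} {x y z : α} (h : CoReach G S x y) (h' : CoReach G S y z) :
    CoReach G S x z := h.trans h'

theorem reach_mono {S T : Set α} (hST : S ⊆ T) {x y : α} (h : Reach G S x y) : Reach G T x y :=
  Relation.ReflTransGen.mono (fun _ _ ⟨ha, hb, hc⟩ => ⟨hST ha, hST hb, hc⟩) _ _ h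
theorem coreach_mono {S T : Set α} (hST : S ⊆ T) {x y : α} (h : CoReach G S x y) :
    CoReach G T x y :=
  Relation.ReflTransGen.mono (fun _ _ ⟨ha, hb, hc, hd⟩ => ⟨hST ha, hST hb, hc, hd⟩) _ _ h

/-- Crossing lemma for reflexive-transitive closures. -/
theorem crossing {r : α → α → Prop} {P : α → Prop} {a b : α}
    (h : Relation.ReflTransGen r a b) (hPa : P a) (hPb : ¬ P b) :
    ∃ x y, Relation.ReflTransGen r a x ∧ r x y ∧ Relation.ReflTransGen r y b ∧ P x ∧ ¬ P y := by
  induction h with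
  | refl => exact absurd hPa hPb
  | @tail b c hab hbc ih =>
    by_cases hPb' : P b
    · exact ⟨b, c, hab, hbc, Relation.ReflTransGen.refl, hPb', hPb⟩
    · obtain ⟨x, y, h1, h2, h3, h4, h5⟩ := ih hPb'
      exact ⟨x, y, h1, h2, h3.tail hbc, h4, h5⟩

/-- From a walk in `S` from `w` to `v ≠ w`, extract a neighbour of `v`
reachable from `w` while avoiding `v`. -/
theorem reach_trim {S : Set α} {v w : α} (h : Reach G S w v) (hwv : w ≠ v) :
    ∃ x ∈ S \ {v}, G.Adj x v ∧ Reach G (S \ {v}) w x := by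
  revert hwv
  induction h using Relation.ReflTransGen.head_induction_on with
  | refl => exact fun hwv => absurd rfl hwv
  | @head a c hac hcv ih =>
    intro hav
    obtain ⟨ha, hc, hadj⟩ := hac
    by_cases hc' : c = v
    · subst hc'
      exact ⟨a, ⟨ha, hav⟩, hadj, Relation.ReflTransGen.refl⟩
    · obtain ⟨x, hx, hxv, hreach⟩ := ih hc'
      exact ⟨x, hx, hxv, hreach.head ⟨⟨ha, hav⟩, ⟨hc, hc'⟩, hadj⟩⟩

theorem not_clust_hasP3 {S : Set α} (h : ¬ ClustOn G S) : HasP3 G S := by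
  unfold ClustOn at h
  push_neg at h
  obtain ⟨x, hx, y, hy, z, hz, hxy, hyz, hxz, hnadj⟩ := h
  exact ⟨x, hx, y, hy, z, hz, hxy, hyz, hnadj, hxz⟩

theorem not_clique_has2K1 {S : Set α} (h : ¬ CliqueOn G S) : Has2K1 G S := by
  unfold CliqueOn at h
  push_neg at h
  obtain ⟨x, hx, y, hy, hne, hnadj⟩ := h
  exact ⟨x, hx, y, hy, hne, hnadj⟩

theorem not_indep_hasK2 {S : Set α} (h : ¬ IndepOn G S) : HasK2 G S := by
  unfold IndepOn at h
  push_neg at h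
  obtain ⟨x, hx, y, hy, hadj⟩ := h
  exact ⟨x, hx, y, hy, hadj⟩




theorem univ_not_coconn {S : Set α} {v : α} (hv : v ∈ S)
    (hva : ∀ u ∈ S, u ≠ v → G.Adj v u) (hex : ∃ u ∈ S, u ≠ v) : ¬ CoConnOn G S := by
  obtain ⟨u, hu, hune⟩ := hex
  intro cc
  have h := cc hv hu
  rcases Relation.ReflTransGen.cases_head h with h | ⟨c, ⟨_, hcS, hne, hnadj⟩, _⟩
  · exact hune h.symm
  · exact hnadj (hva c hcS (Ne.symm hne))

theorem seinsche (hp4 : P4F G) :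
    ∀ n (S : Set α), S.Finite → S.ncard ≤ n → ConnOn G S →
    (∃ x ∈ S, ∃ y ∈ S, x ≠ y) → ¬ CoConnOn G S := by
  intro n
  induction n with
  | zero =>
    intro S hfin hcard _ ⟨x, hx, _⟩
    rw [Nat.le_zero, Set.ncard_eq_zero hfin] at hcard
    exact absurd hx (by simp [hcard])
  | succ n IH =>
    intro S hfin hcard hconn ⟨v, hv, y, hy, hvy⟩
    set H : Set α := S \ {v} with hHdef
    have hyH : y ∈ H := ⟨hy, Ne.symm hvy⟩
    have hHS : H ⊆ S := Set.diff_subset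
    have hHfin : H.Finite := hfin.subset hHS
    -- a vertex of H adjacent to v, reachable in H from any given u ∈ H
    have trim : ∀ u ∈ H, ∃ x ∈ H, G.Adj x v ∧ Reach G H u x := by
      intro u hu
      exact reach_trim (hconn (hHS hu) hv) hu.2
    by_cases hconnH : ConnOn G H
    · -- H connected
      by_cases htwo : ∃ p ∈ H, ∃ q ∈ H, p ≠ q
      · -- apply IH to H
        have hcardH : H.ncard ≤ n := by
          have hlt : H.ncard < S.ncard := Set.ncard_lt_ncard ⟨hHS, fun hSH => (hSH hv).2 rfl⟩ hfin
          omega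
        have hnotcc := IH H hHfin hcardH hconnH htwo
        unfold CoConnOn at hnotcc
        push_neg at hnotcc
        obtain ⟨p, hp, q, hq, hpq⟩ := hnotcc
        -- missed set M = {u ∈ H | ¬ Adj v u}
        by_cases hA : ∃ a, (a ∈ H ∧ ¬ G.Adj v a) ∧ ∃ b, (b ∈ H ∧ ¬ G.Adj v b) ∧
            ¬ CoReach G H a b
        · obtain ⟨a, ⟨haH, hva⟩, b, ⟨hbH, hvb⟩, hab⟩ := hA
          have key : ∀ a' b' u', a' ∈ H → b' ∈ H → ¬ G.Adj v a' → ¬ G.Adj v b' →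
              ¬ CoReach G H a' b' → u' ∈ H → G.Adj v u' → CoReach G H u' a' → False := by
            intro a' b' u' ha' hb' hva' hvb' hab' hu' hvu' hreach
            obtain ⟨p₁, q₁, hup, ⟨hp₁H, hq₁H, hpqne, hpqnadj⟩, hqa, hvp₁, hvq₁⟩ :=
              crossing (P := fun z => G.Adj v z) hreach hvu' hva'
            have hpa' : CoReach G H p₁ a' :=
              Relation.ReflTransGen.head ⟨hp₁H, hq₁H, hpqne, hpqnadj⟩ hqa
            have hpb' : G.Adj p₁ b' := by
              by_contra hn
              have hne : p₁ ≠ b' := by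
                rintro rfl; exact hab' (coreach_symm hpa')
              exact hab' (coreach_trans (coreach_symm hpa')
                (Relation.ReflTransGen.single ⟨hp₁H, hb', hne, hn⟩))
            have hqb' : G.Adj q₁ b' := by
              by_contra hn
              have hne : q₁ ≠ b' := by
                rintro rfl; exact hab' (coreach_symm hqa)
              exact hab' (coreach_trans (coreach_symm hqa)
                (Relation.ReflTransGen.single ⟨hq₁H, hb', hne, hn⟩))
            exact hp4 v p₁ b' q₁ hvp₁ hpb' hqb'.symm hvb' hpqnadj hvq₁
              (Ne.symm hb'.2) hpqne (Ne.symm hq₁H.2)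
          by_cases htouch : ∃ u ∈ H, G.Adj v u ∧ (CoReach G H u a ∨ CoReach G H u b)
          · obtain ⟨u, huH, hvu, hor⟩ := htouch
            rcases hor with h | h
            · exact absurd (key a b u haH hbH hva hvb hab huH hvu h) id
            · exact absurd (key b a u hbH haH hvb hva (fun hc => hab (coreach_symm hc))
                huH hvu h) id
          · -- v touches neither co-class; W = N(v) ∩ H is co-closed
            push_neg at htouch
            have wclosed : ∀ u c, u ∈ H → G.Adj v u → c ∈ H → CoReach G H u c →
                G.Adj v c := by
              intro u c huH hvu hcH hreach
              by_contra hnvc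
              have hna : ¬ CoReach G H u a := fun h => (htouch u huH hvu).1 h
              obtain ⟨p₁, q₁, hup, ⟨hp₁H, hq₁H, hpqne, hpqnadj⟩, hqc, hvp₁, hvq₁⟩ :=
                crossing (P := fun z => G.Adj v z) hreach hvu hnvc
              have hupr : CoReach G H u p₁ := hup
              have huqr : CoReach G H u q₁ :=
                hupr.tail ⟨hp₁H, hq₁H, hpqne, hpqnadj⟩
              have hpa : G.Adj p₁ a := by
                by_contra hn
                have hne : p₁ ≠ a := by
                  rintro rfl; exact hna hupr
                exact hna (coreach_trans hupr
                  (Relation.ReflTransGen.single ⟨hp₁H, haH, hne, hn⟩))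
              have hqa : G.Adj q₁ a := by
                by_contra hn
                have hne : q₁ ≠ a := by
                  rintro rfl; exact hna huqr
                exact hna (coreach_trans huqr
                  (Relation.ReflTransGen.single ⟨hq₁H, haH, hne, hn⟩))
              exact hp4 v p₁ a q₁ hvp₁ hpa hqa.symm hva hpqnadj hvq₁
                (Ne.symm haH.2) hpqne (Ne.symm hq₁H.2)
            obtain ⟨w, hwH, hwv, _⟩ := trim a haH
            intro cc
            have hstay : ∀ z, CoReach G S w z → z ∈ H ∧ G.Adj v z := by
              intro z hz
              induction hz with
              | refl => exact ⟨hwH, hwv.symm⟩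
              | @tail b₁ c₁ hwb hbc ih =>
                obtain ⟨hb₁H, hvb₁⟩ := ih
                obtain ⟨_, hc₁S, hbcne, hbcnadj⟩ := hbc
                have hc₁H : c₁ ∈ H := by
                  refine ⟨hc₁S, ?_⟩
                  rintro rfl
                  exact hbcnadj hvb₁.symm
                exact ⟨hc₁H, wclosed b₁ c₁ hb₁H hvb₁ hc₁H
                  (Relation.ReflTransGen.single ⟨hb₁H, hc₁H, hbcne, hbcnadj⟩)⟩
            exact hva (hstay a (cc (hHS hwH) (hHS haH))).2
        · -- all missed vertices pairwise co-reach each other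
          push_neg at hA
          by_cases hM : ∃ m, m ∈ H ∧ ¬ G.Adj v m
          · obtain ⟨m₀, hm₀H, hvm₀⟩ := hM
            have hout : ∃ f, f ∈ H ∧ ¬ CoReach G H m₀ f := by
              by_contra hn
              push_neg at hn
              exact hpq (coreach_trans (coreach_symm (hn p hp)) (hn q hq))
            obtain ⟨f, hfH, hmf⟩ := hout
            intro cc
            have hstay : ∀ z, CoReach G S f z → z ∈ H ∧ ¬ CoReach G H m₀ z := by
              intro z hz
              induction hz with
              | refl => exact ⟨hfH, hmf⟩
              | @tail b₁ c₁ hfb hbc ih =>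
                obtain ⟨hb₁H, hmb₁⟩ := ih
                obtain ⟨_, hc₁S, hbcne, hbcnadj⟩ := hbc
                have hc₁H : c₁ ∈ H := by
                  refine ⟨hc₁S, ?_⟩
                  rintro rfl
                  exact hmb₁ (hA m₀ ⟨hm₀H, hvm₀⟩ b₁ ⟨hb₁H, fun h => hbcnadj h.symm⟩)
                refine ⟨hc₁H, fun h => hmb₁ (coreach_trans h
                  (Relation.ReflTransGen.single ⟨hc₁H, hb₁H, Ne.symm hbcne,
                    fun hadj => hbcnadj hadj.symm⟩))⟩
            exact (hstay v (cc (hHS hfH) hv)).1.2 rfl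
          · push_neg at hM
            exact univ_not_coconn hv (fun u hu hune => hM u ⟨hu, hune⟩)
              ⟨y, hy, Ne.symm hvy⟩
      · -- H has at most one element: v adjacent to the unique y
        push_neg at htwo
        have huniv : ∀ u ∈ S, u ≠ v → G.Adj v u := by
          intro u hu hune
          have huH : u ∈ H := ⟨hu, hune⟩
          obtain ⟨x, hxH, hxv, _⟩ := trim u huH
          have : x = u := htwo x hxH u huH
          subst this
          exact hxv.symm
        exact univ_not_coconn hv huniv ⟨y, hy, Ne.symm hvy⟩
    · -- H disconnected: v is universal in S
      unfold ConnOn at hconnH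
      push_neg at hconnH
      obtain ⟨p, hp, q, hq, hpq⟩ := hconnH
      have huniv : ∀ u ∈ S, u ≠ v → G.Adj v u := by
        intro u hu hune
        by_contra hnadj
        have huH : u ∈ H := ⟨hu, hune⟩
        obtain ⟨x₀, hx₀H, hx₀v, hux₀⟩ := trim u huH
        obtain ⟨a, b, hua, ⟨haH, hbH, hadjab⟩, hbx₀, hnva, hvb⟩ :=
          crossing (P := fun z => ¬ G.Adj v z) hux₀ hnadj (by simp [hx₀v.symm])
        simp only [not_not] at hvb
        -- a witness s ∈ {p,q} not reachable from a in H
        have hsex : ∃ s ∈ H, ¬ Reach G H a s := by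
          by_cases h1 : Reach G H a p
          · exact ⟨q, hq, fun h2 => hpq (reach_trans (reach_symm h1) h2)⟩
          · exact ⟨p, hp, h1⟩
        obtain ⟨s, hsH, hnas⟩ := hsex
        obtain ⟨w', hw'H, hw'v, hsw'⟩ := trim s hsH
        have hnaw' : ¬ Reach G H a w' := by
          intro h
          exact hnas (reach_trans h (reach_symm hsw'))
        have hnbw' : ¬ G.Adj b w' := by
          intro h
          exact hnaw' (Relation.ReflTransGen.head ⟨haH, hbH, hadjab⟩
            (Relation.ReflTransGen.single ⟨hbH, hw'H, h⟩))
        have hnaw'adj : ¬ G.Adj a w' := by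
          intro h
          exact hnaw' (Relation.ReflTransGen.single ⟨haH, hw'H, h⟩)
        have hanev : a ≠ v := haH.2
        have hbnew' : b ≠ w' := by
          rintro rfl
          exact hnaw' (Relation.ReflTransGen.single ⟨haH, hbH, hadjab⟩)
        have hanew' : a ≠ w' := by
          rintro rfl
          exact hnaw' Relation.ReflTransGen.refl
        exact hp4 a b v w' hadjab hvb.symm hw'v.symm
          (fun h => hnva h.symm) hnbw' hnaw'adj hanev hbnew' hanew'
      exact univ_not_coconn hv huniv ⟨y, hy, Ne.symm hvy⟩

theorem clust_anti {S T : Set α} (hsub : T ⊆ S) (h : ClustOn G S) : ClustOn G T :=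
  fun _ hx _ hy _ hz => h (hsub hx) (hsub hy) (hsub hz)
theorem indep_anti {S T : Set α} (hsub : T ⊆ S) (h : IndepOn G S) : IndepOn G T :=
  fun _ hx _ hy => h (hsub hx) (hsub hy)
theorem clique_anti {S T : Set α} (hsub : T ⊆ S) (h : CliqueOn G S) : CliqueOn G T :=
  fun _ hx _ hy => h (hsub hx) (hsub hy)
theorem clique_clust {S : Set α} (h : CliqueOn G S) : ClustOn G S :=
  fun _ hx _ _ _ hz _ _ hxz => h hx hz hxz
theorem clust_of_not_hasP3 {S : Set α} (h : ¬ HasP3 G S) : ClustOn G S := by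
  by_contra hc; exact h (not_clust_hasP3 hc)
theorem clique_of_not_has2K1 {S : Set α} (h : ¬ Has2K1 G S) : CliqueOn G S := by
  by_contra hc; exact h (not_clique_has2K1 hc)
theorem indep_of_not_hasK2 {S : Set α} (h : ¬ HasK2 G S) : IndepOn G S := by
  by_contra hc; exact h (not_indep_hasK2 hc)
theorem mono_of_clust {S : Set α} (h : ClustOn G S) : MonoOn G S :=
  ⟨∅, Set.empty_subset _, fun x hx => absurd hx (Set.notMem_empty x),
    by rwa [Set.diff_empty]⟩

theorem has2K2_mono {S T : Set α} (hsub : S ⊆ T) (h : Has2K2 G S) : Has2K2 G T := by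
  obtain ⟨a, ha, b, hb, c, hc, d, hd, r⟩ := h
  exact ⟨a, hsub ha, b, hsub hb, c, hsub hc, d, hsub hd, r⟩
theorem hasC4_mono {S T : Set α} (hsub : S ⊆ T) (h : HasC4 G S) : HasC4 G T := by
  obtain ⟨a, ha, b, hb, c, hc, d, hd, r⟩ := h
  exact ⟨a, hsub ha, b, hsub hb, c, hsub hc, d, hsub hd, r⟩
theorem hasP3K2_mono {S T : Set α} (hsub : S ⊆ T) (h : HasP3K2 G S) : HasP3K2 G T := by
  obtain ⟨a, ha, b, hb, c, hc, d, hd, e, he, r⟩ := h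
  exact ⟨a, hsub ha, b, hsub hb, c, hsub hc, d, hsub hd, e, hsub he, r⟩
theorem hasBfly_mono {S T : Set α} (hsub : S ⊆ T) (h : HasBfly G S) : HasBfly G T := by
  obtain ⟨a, ha, b, hb, c, hc, d, hd, e, he, r⟩ := h
  exact ⟨a, hsub ha, b, hsub hb, c, hsub hc, d, hsub hd, e, hsub he, r⟩
theorem hasX9_mono {S T : Set α} (hsub : S ⊆ T) (h : HasX9 G S) : HasX9 G T := by
  obtain ⟨a, ha, b, hb, c, hc, d, hd, e, he, r⟩ := h
  exact ⟨a, hsub ha, b, hsub hb, c, hsub hc, d, hsub hd, e, hsub he, r⟩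
theorem hasX10_mono {S T : Set α} (hsub : S ⊆ T) (h : HasX10 G S) : HasX10 G T := by
  obtain ⟨a, ha, b, hb, c, hc, d, hd, e, he, f, hf, r⟩ := h
  exact ⟨a, hsub ha, b, hsub hb, c, hsub hc, d, hsub hd, e, hsub he, f, hsub hf, r⟩
theorem hasX11_mono {S T : Set α} (hsub : S ⊆ T) (h : HasX11 G S) : HasX11 G T := by
  obtain ⟨a, ha, b, hb, c, hc, d, hd, e, he, f, hf, r⟩ := h
  exact ⟨a, hsub ha, b, hsub hb, c, hsub hc, d, hsub hd, e, hsub he, f, hsub hf, r⟩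
theorem hasX12_mono {S T : Set α} (hsub : S ⊆ T) (h : HasX12 G S) : HasX12 G T := by
  obtain ⟨a, ha, b, hb, c, hc, d, hd, e, he, f, hf, r⟩ := h
  exact ⟨a, hsub ha, b, hsub hb, c, hsub hc, d, hsub hd, e, hsub he, f, hsub hf, r⟩

theorem mono_union {S T : Set α} (hd : Disjoint S T)
    (hcr : ∀ x ∈ S, ∀ y ∈ T, ¬ G.Adj x y) (h1 : MonoOn G S) (h2 : MonoOn G T) :
    MonoOn G (S ∪ T) := by
  obtain ⟨A₁, hA₁, hi₁, hc₁⟩ := h1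
  obtain ⟨A₂, hA₂, hi₂, hc₂⟩ := h2
  refine ⟨A₁ ∪ A₂, Set.union_subset_union hA₁ hA₂, ?_, ?_⟩
  · rintro x (hx | hx) y (hy | hy)
    · exact hi₁ hx hy
    · exact hcr x (hA₁ hx) y (hA₂ hy)
    · exact fun h => hcr y (hA₁ hy) x (hA₂ hx) h.symm
    · exact hi₂ hx hy
  · have hmem : ∀ z ∈ (S ∪ T) \ (A₁ ∪ A₂), z ∈ S \ A₁ ∨ z ∈ T \ A₂ := by
      rintro z ⟨hz | hz, hnz⟩
      · exact Or.inl ⟨hz, fun h => hnz (Or.inl h)⟩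
      · exact Or.inr ⟨hz, fun h => hnz (Or.inr h)⟩
    intro x hx y hy z hz hxy hyz hxz
    rcases hmem x hx with hx' | hx' <;> rcases hmem y hy with hy' | hy' <;>
      rcases hmem z hz with hz' | hz'
    · exact hc₁ hx' hy' hz' hxy hyz hxz
    · exact absurd hyz (hcr y hy'.1 z hz'.1)
    · exact absurd hxy (hcr x hx'.1 y hy'.1)
    · exact absurd hxy (hcr x hx'.1 y hy'.1)
    · exact absurd hxy (fun h => hcr y hy'.1 x hx'.1 h.symm)
    · exact absurd hxy (fun h => hcr y hy'.1 x hx'.1 h.symm)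
    · exact absurd hyz (fun h => hcr z hz'.1 y hy'.1 h.symm)
    · exact hc₂ hx' hy' hz' hxy hyz hxz

theorem not_conn_split {S : Set α} (hnc : ¬ ConnOn G S) :
    ∃ C ⊆ S, C.Nonempty ∧ (S \ C).Nonempty ∧ ∀ x ∈ C, ∀ y ∈ S \ C, ¬ G.Adj x y := by
  unfold ConnOn at hnc
  push_neg at hnc
  obtain ⟨p, hp, q, hq, hre⟩ := hnc
  refine ⟨{z | z ∈ S ∧ Reach G S p z}, fun z hz => hz.1, ⟨p, hp, .refl⟩,
    ⟨q, hq, fun hq' => hre hq'.2⟩, ?_⟩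
  rintro x ⟨hxS, hxr⟩ y ⟨hyS, hyr⟩ hadj
  exact hyr ⟨hyS, hxr.tail ⟨hxS, hyS, hadj⟩⟩

theorem not_coconn_split {S : Set α} (hnc : ¬ CoConnOn G S) :
    ∃ C ⊆ S, C.Nonempty ∧ (S \ C).Nonempty ∧ ∀ x ∈ C, ∀ y ∈ S \ C, G.Adj x y := by
  unfold CoConnOn at hnc
  push_neg at hnc
  obtain ⟨p, hp, q, hq, hre⟩ := hnc
  refine ⟨{z | z ∈ S ∧ CoReach G S p z}, fun z hz => hz.1, ⟨p, hp, .refl⟩,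
    ⟨q, hq, fun hq' => hre hq'.2⟩, ?_⟩
  rintro x ⟨hxS, hxr⟩ y ⟨hyS, hyr⟩
  by_contra hadj
  have hne : x ≠ y := by rintro rfl; exact hyr ⟨hyS, hxr⟩
  exact hyr ⟨hyS, hxr.tail ⟨hxS, hyS, hne, hadj⟩⟩

theorem join_split {S : Set α} (hp4 : P4F G) (hfin : S.Finite) (hconn : ConnOn G S)
    (htwo : ∃ x ∈ S, ∃ y ∈ S, x ≠ y) :
    ∃ C ⊆ S, C.Nonempty ∧ (S \ C).Nonempty ∧ ∀ x ∈ C, ∀ y ∈ S \ C, G.Adj x y :=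
  not_coconn_split (seinsche hp4 S.ncard S hfin le_rfl hconn htwo)

theorem splitOn_of_clique {S : Set α} (h : CliqueOn G S) : SplitOn G S :=
  ⟨∅, Set.empty_subset _, fun x hx => absurd hx (Set.notMem_empty x),
    by rwa [Set.diff_empty]⟩
theorem splitOn_union_indep {S T : Set α} (hd : Disjoint S T)
    (hcr : ∀ x ∈ S, ∀ y ∈ T, ¬ G.Adj x y) (h1 : SplitOn G S) (h2 : IndepOn G T) :
    SplitOn G (S ∪ T) := by
  obtain ⟨A₁, hA₁, hi₁, hc₁⟩ := h1
  refine ⟨A₁ ∪ T, Set.union_subset_union hA₁ (subset_rfl), ?_, ?_⟩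
  · rintro x (hx | hx) y (hy | hy)
    · exact hi₁ hx hy
    · exact hcr x (hA₁ hx) y hy
    · exact fun h => hcr y (hA₁ hy) x hx h.symm
    · exact h2 hx hy
  · refine clique_anti ?_ hc₁
    rintro z ⟨hz | hz, hnz⟩
    · exact ⟨hz, fun h => hnz (Or.inl h)⟩
    · exact absurd (Or.inr hz) hnz
theorem splitOn_join_clique {S T : Set α}
    (hcr : ∀ x ∈ S, ∀ y ∈ T, G.Adj x y) (h1 : SplitOn G S) (h2 : CliqueOn G T) :
    SplitOn G (S ∪ T) := by
  obtain ⟨A₁, hA₁, hi₁, hc₁⟩ := h1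
  refine ⟨A₁, hA₁.trans Set.subset_union_left, hi₁, ?_⟩
  intro x hx y hy hxy
  have hx' : x ∈ S \ A₁ ∨ x ∈ T := by
    rcases hx.1 with h | h
    · exact Or.inl ⟨h, hx.2⟩
    · exact Or.inr h
  have hy' : y ∈ S \ A₁ ∨ y ∈ T := by
    rcases hy.1 with h | h
    · exact Or.inl ⟨h, hy.2⟩
    · exact Or.inr h
  rcases hx' with hx' | hx' <;> rcases hy' with hy' | hy'
  · exact hc₁ hx' hy' hxy
  · exact hcr x hx'.1 y hy'
  · exact (hcr y hy'.1 x hx').symm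
  · exact h2 hx' hy' hxy

theorem split_lemma (hp4 : P4F G) :
    ∀ n (S : Set α), S.Finite → S.ncard ≤ n → ¬ SplitOn G S →
    Has2K2 G S ∨ HasC4 G S := by
  intro n
  induction n with
  | zero =>
    intro S hfin hcard hns
    rw [Nat.le_zero, Set.ncard_eq_zero hfin] at hcard
    subst hcard
    exact absurd (splitOn_of_clique (fun x hx => absurd hx (Set.notMem_empty x))) hns
  | succ n IH =>
    intro S hfin hcard hns
    by_cases htwo : ∃ x ∈ S, ∃ y ∈ S, x ≠ y
    · by_cases hconn : ConnOn G S
      · obtain ⟨C, hCS, hCne, hDne, hcr⟩ := join_split hp4 hfin hconn htwo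
        have hCD : C ∪ (S \ C) = S := Set.union_diff_cancel hCS
        by_cases h2P : Has2K1 G C
        · by_cases h2Q : Has2K1 G (S \ C)
          · obtain ⟨p1, hp1, p2, hp2, hpne, hpnadj⟩ := h2P
            obtain ⟨q1, hq1, q2, hq2, hqne, hqnadj⟩ := h2Q
            exact Or.inr ⟨p1, hCS hp1, q1, hq1.1, p2, hCS hp2, q2, hq2.1,
              hcr p1 hp1 q1 hq1, (hcr p2 hp2 q1 hq1).symm, hcr p2 hp2 q2 hq2,
              (hcr p1 hp1 q2 hq2).symm, hpnadj, hqnadj, hpne, hqne⟩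
          · have hclD := clique_of_not_has2K1 h2Q
            have hnsC : ¬ SplitOn G C := by
              intro hsp
              exact hns (hCD ▸ splitOn_join_clique hcr hsp hclD)
            have hlt : C.ncard ≤ n := by
              have : C.ncard < S.ncard := by
                refine Set.ncard_lt_ncard ⟨hCS, fun hSC => ?_⟩ hfin
                obtain ⟨d, hd⟩ := hDne
                exact hd.2 (hSC hd.1)
              omega
            rcases IH C (hfin.subset hCS) hlt hnsC with h | h
            · exact Or.inl (has2K2_mono hCS h)
            · exact Or.inr (hasC4_mono hCS h)
        · have hclC := clique_of_not_has2K1 h2P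
          have hnsD : ¬ SplitOn G (S \ C) := by
            intro hsp
            refine hns ?_
            have := splitOn_join_clique (T := C)
              (fun x hx y hy => (hcr y hy x hx).symm) hsp hclC
            rwa [Set.union_comm, hCD] at this
          have hlt : (S \ C).ncard ≤ n := by
            have : (S \ C).ncard < S.ncard := by
              refine Set.ncard_lt_ncard ⟨Set.diff_subset, fun hSC => ?_⟩ hfin
              obtain ⟨c, hc⟩ := hCne
              exact (hSC (hCS hc)).2 hc
            omega
          rcases IH (S \ C) (hfin.subset Set.diff_subset) hlt hnsD with h | h
          · exact Or.inl (has2K2_mono Set.diff_subset h)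
          · exact Or.inr (hasC4_mono Set.diff_subset h)
      · obtain ⟨C, hCS, hCne, hDne, hcr⟩ := not_conn_split hconn
        have hCD : C ∪ (S \ C) = S := Set.union_diff_cancel hCS
        have hdisj : Disjoint C (S \ C) := Set.disjoint_sdiff_right
        by_cases hK2C : HasK2 G C
        · by_cases hK2D : HasK2 G (S \ C)
          · obtain ⟨a, ha, b, hb, hab⟩ := hK2C
            obtain ⟨c, hc, d, hd, hcd⟩ := hK2D
            exact Or.inl ⟨a, hCS ha, b, hCS hb, c, hc.1, d, hd.1,
              hab, hcd, hcr a ha c hc, hcr a ha d hd, hcr b hb c hc, hcr b hb d hd,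
              fun h => hc.2 (h ▸ ha), fun h => hd.2 (h ▸ ha),
              fun h => hc.2 (h ▸ hb), fun h => hd.2 (h ▸ hb)⟩
          · have hiD := indep_of_not_hasK2 hK2D
            have hnsC : ¬ SplitOn G C := by
              intro hsp
              exact hns (hCD ▸ splitOn_union_indep hdisj hcr hsp hiD)
            have hlt : C.ncard ≤ n := by
              have : C.ncard < S.ncard := by
                refine Set.ncard_lt_ncard ⟨hCS, fun hSC => ?_⟩ hfin
                obtain ⟨d, hd⟩ := hDne
                exact hd.2 (hSC hd.1)
              omega
            rcases IH C (hfin.subset hCS) hlt hnsC with h | h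
            · exact Or.inl (has2K2_mono hCS h)
            · exact Or.inr (hasC4_mono hCS h)
        · have hiC := indep_of_not_hasK2 hK2C
          have hnsD : ¬ SplitOn G (S \ C) := by
            intro hsp
            refine hns ?_
            have := splitOn_union_indep (S := S \ C) (T := C) hdisj.symm
              (fun x hx y hy h => hcr y hy x hx h.symm) hsp hiC
            rwa [Set.union_comm, hCD] at this
          have hlt : (S \ C).ncard ≤ n := by
            have : (S \ C).ncard < S.ncard := by
              refine Set.ncard_lt_ncard ⟨Set.diff_subset, fun hSC => ?_⟩ hfin
              obtain ⟨c, hc⟩ := hCne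
              exact (hSC (hCS hc)).2 hc
            omega
          rcases IH (S \ C) (hfin.subset Set.diff_subset) hlt hnsD with h | h
          · exact Or.inl (has2K2_mono Set.diff_subset h)
          · exact Or.inr (hasC4_mono Set.diff_subset h)
    · push_neg at htwo
      exact absurd (splitOn_of_clique (fun x hx y hy hne => absurd (htwo x hx y hy) hne)) hns

theorem lemma2K2P3 (hp4 : P4F G) :
    ∀ n (S : Set α), S.Finite → S.ncard ≤ n → Has2K2 G S → HasP3 G S →
    HasC4 G S ∨ HasP3K2 G S ∨ HasBfly G S := by
  intro n
  induction n with
  | zero =>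
    intro S hfin hcard h2k2 _
    rw [Nat.le_zero, Set.ncard_eq_zero hfin] at hcard
    obtain ⟨a, ha, _⟩ := h2k2
    exact absurd ha (by simp [hcard])
  | succ n IH =>
    intro S hfin hcard h2k2 hp3
    obtain ⟨a, ha, b, hb, c, hc, d, hd, hab, hcd, hnac, hnad, hnbc, hnbd,
      hneac, hnead, hnebc, hnebd⟩ := h2k2
    by_cases hconn : ConnOn G S
    · obtain ⟨C, hCS, hCne, hDne, hcr⟩ :=
        join_split hp4 hfin hconn ⟨a, ha, b, hb, hab.ne⟩
      have sameSide : ∀ x y, x ∈ S → y ∈ S → ¬ G.Adj x y → x ≠ y →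
          (x ∈ C → y ∈ C) := by
        intro x y hxS hyS hnadj hne hxC
        by_contra hyC
        exact hnadj (hcr x hxC y ⟨hyS, hyC⟩)
      by_cases haC : a ∈ C
      · have hcC : c ∈ C := sameSide a c ha hc hnac hneac haC
        have hdC : d ∈ C := sameSide a d ha hd hnad hnead haC
        have hbC : b ∈ C := sameSide c b hc hb (fun h => hnbc h.symm)
          (Ne.symm hnebc) hcC
        obtain ⟨h₀, hh₀⟩ := hDne
        exact Or.inr (Or.inr ⟨h₀, hh₀.1, a, ha, b, hb, c, hc, d, hd,
          hab, hcd, hnac, hnad, hnbc, hnbd, hneac, hnead, hnebc, hnebd,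
          (hcr a haC h₀ hh₀).symm, (hcr b hbC h₀ hh₀).symm,
          (hcr c hcC h₀ hh₀).symm, (hcr d hdC h₀ hh₀).symm⟩)
      · have haD : a ∈ S \ C := ⟨ha, haC⟩
        have sameSideD : ∀ x y, x ∈ S → y ∈ S → ¬ G.Adj x y → x ≠ y →
            (x ∈ S \ C → y ∈ S \ C) := by
          intro x y hxS hyS hnadj hne hxD
          refine ⟨hyS, fun hyC => ?_⟩
          exact hnadj (hcr y hyC x hxD).symm
        have hcD : c ∈ S \ C := sameSideD a c ha hc hnac hneac haD
        have hdD : d ∈ S \ C := sameSideD a d ha hd hnad hnead haD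
        have hbD : b ∈ S \ C := sameSideD c b hc hb (fun h => hnbc h.symm)
          (Ne.symm hnebc) hcD
        obtain ⟨h₀, hh₀⟩ := hCne
        exact Or.inr (Or.inr ⟨h₀, hCS hh₀, a, ha, b, hb, c, hc, d, hd,
          hab, hcd, hnac, hnad, hnbc, hnbd, hneac, hnead, hnebc, hnebd,
          hcr h₀ hh₀ a haD, hcr h₀ hh₀ b hbD,
          hcr h₀ hh₀ c hcD, hcr h₀ hh₀ d hdD⟩)
    · obtain ⟨C, hCS, hCne, hDne, hcr⟩ := not_conn_split hconn
      obtain ⟨x, hx, y, hy, z, hz, hxy, hyz, hnxz, hnexz⟩ := hp3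
      have sameAdj : ∀ u w, u ∈ S → w ∈ S → G.Adj u w → (u ∈ C ↔ w ∈ C) := by
        intro u w huS hwS hadj
        constructor
        · intro huC
          by_contra hwC
          exact hcr u huC w ⟨hwS, hwC⟩ hadj
        · intro hwC
          by_contra huC
          exact hcr w hwC u ⟨huS, huC⟩ hadj.symm
      -- helper: recurse into a part
      have recurse : ∀ T : Set α, T ⊆ S → (S \ T).Nonempty →
          Has2K2 G T → HasP3 G T → HasC4 G S ∨ HasP3K2 G S ∨ HasBfly G S := by
        intro T hTS hTne h2 h3
        have hlt : T.ncard ≤ n := by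
          have : T.ncard < S.ncard := by
            refine Set.ncard_lt_ncard ⟨hTS, fun hST => ?_⟩ hfin
            obtain ⟨w, hw⟩ := hTne
            exact hw.2 (hST hw.1)
          omega
        rcases IH T (hfin.subset hTS) hlt h2 h3 with h | h | h
        · exact Or.inl (hasC4_mono hTS h)
        · exact Or.inr (Or.inl (hasP3K2_mono hTS h))
        · exact Or.inr (Or.inr (hasBfly_mono hTS h))
      by_cases hyC : y ∈ C
      · have hxC : x ∈ C := (sameAdj x y hx hy hxy).2 hyC
        have hzC : z ∈ C := (sameAdj y z hy hz hyz).1 hyC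
        by_cases hK2D : HasK2 G (S \ C)
        · obtain ⟨e, he, f, hf, hef⟩ := hK2D
          have hne : ∀ u, u ∈ C → ∀ w, w ∈ S \ C → u ≠ w ∧ ¬ G.Adj u w := by
            intro u hu w hw
            exact ⟨fun h => hw.2 (h ▸ hu), hcr u hu w hw⟩
          exact Or.inr (Or.inl ⟨x, hx, y, hy, z, hz, e, he.1, f, hf.1,
            hxy, hyz, hnxz, hnexz, hef,
            (hne x hxC e he).2, (hne x hxC f hf).2, (hne y hyC e he).2,
            (hne y hyC f hf).2, (hne z hzC e he).2, (hne z hzC f hf).2,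
            (hne x hxC e he).1, (hne x hxC f hf).1, (hne y hyC e he).1,
            (hne y hyC f hf).1, (hne z hzC e he).1, (hne z hzC f hf).1⟩)
        · have hiD := indep_of_not_hasK2 hK2D
          have hsC : ∀ u w, u ∈ S → w ∈ S → G.Adj u w → u ∈ C := by
            intro u w huS hwS hadj
            by_contra huC
            have hwC : w ∉ C := fun hwC => huC ((sameAdj u w huS hwS hadj).2 hwC)
            exact hiD ⟨huS, huC⟩ ⟨hwS, hwC⟩ hadj
          exact recurse C hCS hDne
            ⟨a, hsC a b ha hb hab, b, hsC b a hb ha hab.symm,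
             c, hsC c d hc hd hcd, d, hsC d c hd hc hcd.symm,
             hab, hcd, hnac, hnad, hnbc, hnbd, hneac, hnead, hnebc, hnebd⟩
            ⟨x, hxC, y, hyC, z, hzC, hxy, hyz, hnxz, hnexz⟩
      · have hyD : y ∈ S \ C := ⟨hy, hyC⟩
        have hxD : x ∈ S \ C := ⟨hx, fun h => hyC ((sameAdj x y hx hy hxy).1 h)⟩
        have hzD : z ∈ S \ C := ⟨hz, fun h => hyC ((sameAdj y z hy hz hyz).2 h)⟩
        by_cases hK2C : HasK2 G C
        · obtain ⟨e, he, f, hf, hef⟩ := hK2C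
          have hne : ∀ u, u ∈ S \ C → ∀ w, w ∈ C → u ≠ w ∧ ¬ G.Adj u w := by
            intro u hu w hw
            exact ⟨fun h => hu.2 (h ▸ hw), fun h => hcr w hw u hu h.symm⟩
          exact Or.inr (Or.inl ⟨x, hx, y, hy, z, hz, e, hCS he, f, hCS hf,
            hxy, hyz, hnxz, hnexz, hef,
            (hne x hxD e he).2, (hne x hxD f hf).2, (hne y hyD e he).2,
            (hne y hyD f hf).2, (hne z hzD e he).2, (hne z hzD f hf).2,
            (hne x hxD e he).1, (hne x hxD f hf).1, (hne y hyD e he).1,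
            (hne y hyD f hf).1, (hne z hzD e he).1, (hne z hzD f hf).1⟩)
        · have hiC := indep_of_not_hasK2 hK2C
          have hsD : ∀ u w, u ∈ S → w ∈ S → G.Adj u w → u ∈ S \ C := by
            intro u w huS hwS hadj
            refine ⟨huS, fun huC => ?_⟩
            exact hiC huC ((sameAdj u w huS hwS hadj).1 huC) hadj
          have hDSne : (S \ (S \ C)).Nonempty := by
            obtain ⟨e, he⟩ := hCne
            exact ⟨e, hCS he, fun h => h.2 he⟩
          exact recurse (S \ C) Set.diff_subset hDSne
            ⟨a, hsD a b ha hb hab, b, hsD b a hb ha hab.symm,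
             c, hsD c d hc hd hcd, d, hsD d c hd hc hcd.symm,
             hab, hcd, hnac, hnad, hnbc, hnbd, hneac, hnead, hnebc, hnebd⟩
            ⟨x, hxD, y, hyD, z, hzD, hxy, hyz, hnxz, hnexz⟩

theorem clust_k2k1 {S : Set α} (hcl : ClustOn G S) (hk2 : HasK2 G S)
    (h2k1 : Has2K1 G S) : HasK2K1 G S := by
  obtain ⟨a, ha, b, hb, hab⟩ := hk2
  obtain ⟨u, hu, w, hw, hne, hnadj⟩ := h2k1
  have key : ∀ t, t ∈ S → ¬(¬G.Adj t a ∧ ¬G.Adj t b ∧ t ≠ a ∧ t ≠ b) →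
      t = a ∨ t = b ∨ (G.Adj t a ∧ G.Adj t b) := by
    intro t htS hc
    by_cases h1 : t = a
    · exact Or.inl h1
    by_cases h2 : t = b
    · exact Or.inr (Or.inl h2)
    by_cases h3 : G.Adj t a
    · exact Or.inr (Or.inr ⟨h3, hcl htS ha hb h3 hab h2⟩)
    by_cases h4 : G.Adj t b
    · exact Or.inr (Or.inr ⟨hcl htS hb ha h4 hab.symm h1, h4⟩)
    exact absurd ⟨h3, h4, h1, h2⟩ hc
  by_cases hcu : ¬G.Adj u a ∧ ¬G.Adj u b ∧ u ≠ a ∧ u ≠ b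
  · exact ⟨a, ha, b, hb, u, hu, hab, fun h => hcu.1 h.symm,
      fun h => hcu.2.1 h.symm, Ne.symm hcu.2.2.1, Ne.symm hcu.2.2.2⟩
  by_cases hcw : ¬G.Adj w a ∧ ¬G.Adj w b ∧ w ≠ a ∧ w ≠ b
  · exact ⟨a, ha, b, hb, w, hw, hab, fun h => hcw.1 h.symm,
      fun h => hcw.2.1 h.symm, Ne.symm hcw.2.2.1, Ne.symm hcw.2.2.2⟩
  rcases key u hu hcu with rfl | rfl | ⟨hua, hub⟩ <;>
    rcases key w hw hcw with rfl | rfl | ⟨hwa, hwb⟩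
  · exact absurd rfl hne
  · exact absurd hab hnadj
  · exact absurd hwa.symm hnadj
  · exact absurd hab.symm hnadj
  · exact absurd rfl hne
  · exact absurd hwb.symm hnadj
  · exact absurd hua hnadj
  · exact absurd hub hnadj
  · exact absurd (hcl hu ha hw hua hwa.symm hne) hnadj

theorem cliqueSide (hp4 : P4F G) {P Q : Set α} (hPfin : P.Finite)
    (hQne : Q.Nonempty) (hcr : ∀ x ∈ P, ∀ y ∈ Q, G.Adj x y)
    (hclQ : CliqueOn G Q)
    (f3 : ¬(SplitOn G P ∧ CliqueOn G Q))
    (f2 : ¬(IndepOn G Q ∧ ClustOn G P)) :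
    HasX9 G (P ∪ Q) ∨ HasX10 G (P ∪ Q) ∨ HasX11 G (P ∪ Q) ∨ HasX12 G (P ∪ Q) := by
  have hnsP : ¬ SplitOn G P := fun h => f3 ⟨h, hclQ⟩
  obtain ⟨q₀, hq₀⟩ := hQne
  have hPu : P ⊆ P ∪ Q := Set.subset_union_left
  have hQu : Q ⊆ P ∪ Q := Set.subset_union_right
  rcases split_lemma hp4 P.ncard P hPfin le_rfl hnsP with h | hC4
  swap
  · -- C4 in P, hub q₀
    obtain ⟨a, ha, b, hb, c, hc, d, hd, r1, r2, r3, r4, r5, r6, r7, r8⟩ := hC4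
    exact Or.inl ⟨q₀, hQu hq₀, a, hPu ha, b, hPu hb, c, hPu hc, d, hPu hd,
      r1, r2, r3, r4, r5, r6, r7, r8,
      (hcr a ha q₀ hq₀).symm, (hcr b hb q₀ hq₀).symm,
      (hcr c hc q₀ hq₀).symm, (hcr d hd q₀ hq₀).symm⟩
  · -- 2K2 in P
    by_cases hK2Q : HasK2 G Q
    · obtain ⟨p, hp, q, hq, hpq⟩ := hK2Q
      obtain ⟨a, ha, b, hb, c, hc, d, hd, r⟩ := h
      exact Or.inr (Or.inr (Or.inl ⟨p, hQu hp, q, hQu hq, a, hPu ha, b, hPu hb,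
        c, hPu hc, d, hPu hd, hpq, r.1, r.2.1, r.2.2.1, r.2.2.2.1, r.2.2.2.2.1,
        r.2.2.2.2.2.1, r.2.2.2.2.2.2.1, r.2.2.2.2.2.2.2.1, r.2.2.2.2.2.2.2.2.1,
        r.2.2.2.2.2.2.2.2.2,
        (hcr a ha p hp).symm, (hcr b hb p hp).symm, (hcr c hc p hp).symm,
        (hcr d hd p hp).symm, (hcr a ha q hq).symm, (hcr b hb q hq).symm,
        (hcr c hc q hq).symm, (hcr d hd q hq).symm⟩))
    · have hiQ := indep_of_not_hasK2 hK2Q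
      have hP3 : HasP3 G P := by
        apply not_clust_hasP3
        intro hcl
        exact f2 ⟨hiQ, hcl⟩
      rcases lemma2K2P3 hp4 P.ncard P hPfin le_rfl h hP3 with h' | h' | h'
      · obtain ⟨a, ha, b, hb, c, hc, d, hd, r1, r2, r3, r4, r5, r6, r7, r8⟩ := h'
        exact Or.inl ⟨q₀, hQu hq₀, a, hPu ha, b, hPu hb, c, hPu hc, d, hPu hd,
          r1, r2, r3, r4, r5, r6, r7, r8,
          (hcr a ha q₀ hq₀).symm, (hcr b hb q₀ hq₀).symm,
          (hcr c hc q₀ hq₀).symm, (hcr d hd q₀ hq₀).symm⟩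
      · obtain ⟨x, hx, y, hy, z, hz, e, he, f, hf, r⟩ := h'
        exact Or.inr (Or.inl ⟨q₀, hQu hq₀, x, hPu hx, y, hPu hy, z, hPu hz,
          e, hPu he, f, hPu hf, r.1, r.2.1, r.2.2.1, r.2.2.2.1, r.2.2.2.2.1,
          r.2.2.2.2.2.1, r.2.2.2.2.2.2.1, r.2.2.2.2.2.2.2.1,
          r.2.2.2.2.2.2.2.2.1, r.2.2.2.2.2.2.2.2.2.1, r.2.2.2.2.2.2.2.2.2.2.1,
          r.2.2.2.2.2.2.2.2.2.2.2.1, r.2.2.2.2.2.2.2.2.2.2.2.2.1,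
          r.2.2.2.2.2.2.2.2.2.2.2.2.2.1, r.2.2.2.2.2.2.2.2.2.2.2.2.2.2.1,
          r.2.2.2.2.2.2.2.2.2.2.2.2.2.2.2.1, r.2.2.2.2.2.2.2.2.2.2.2.2.2.2.2.2,
          (hcr x hx q₀ hq₀).symm, (hcr y hy q₀ hq₀).symm, (hcr z hz q₀ hq₀).symm,
          (hcr e he q₀ hq₀).symm, (hcr f hf q₀ hq₀).symm⟩)
      · obtain ⟨h₀, hh₀, a, ha, b, hb, c, hc, d, hd, r⟩ := h'
        exact Or.inr (Or.inr (Or.inl ⟨q₀, hQu hq₀, h₀, hPu hh₀, a, hPu ha,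
          b, hPu hb, c, hPu hc, d, hPu hd,
          (hcr h₀ hh₀ q₀ hq₀).symm, r.1, r.2.1, r.2.2.1, r.2.2.2.1,
          r.2.2.2.2.1, r.2.2.2.2.2.1, r.2.2.2.2.2.2.1, r.2.2.2.2.2.2.2.1,
          r.2.2.2.2.2.2.2.2.1, r.2.2.2.2.2.2.2.2.2.1,
          (hcr a ha q₀ hq₀).symm, (hcr b hb q₀ hq₀).symm,
          (hcr c hc q₀ hq₀).symm, (hcr d hd q₀ hq₀).symm,
          r.2.2.2.2.2.2.2.2.2.2.1, r.2.2.2.2.2.2.2.2.2.2.2.1,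
          r.2.2.2.2.2.2.2.2.2.2.2.2.1, r.2.2.2.2.2.2.2.2.2.2.2.2.2⟩))

theorem mainClass (hp4 : P4F G) :
    ∀ n (S : Set α), S.Finite → S.ncard ≤ n → ¬ MonoOn G S →
    HasX9 G S ∨ HasX10 G S ∨ HasX11 G S ∨ HasX12 G S := by
  intro n
  induction n with
  | zero =>
    intro S hfin hcard hnm
    rw [Nat.le_zero, Set.ncard_eq_zero hfin] at hcard
    subst hcard
    exact absurd (mono_of_clust (fun x hx => absurd hx (Set.notMem_empty x))) hnm
  | succ n IH =>
    intro S hfin hcard hnm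
    by_cases htwo : ∃ x ∈ S, ∃ y ∈ S, x ≠ y
    swap
    · push_neg at htwo
      refine absurd (mono_of_clust (fun x hx y hy z hz _ _ hxz => ?_)) hnm
      exact absurd (htwo x hx z hz) hxz
    by_cases hconn : ConnOn G S
    swap
    · obtain ⟨C, hCS, hCne, hDne, hcr⟩ := not_conn_split hconn
      have hCD : C ∪ (S \ C) = S := Set.union_diff_cancel hCS
      have hdisj : Disjoint C (S \ C) := Set.disjoint_sdiff_right
      have recurse : ∀ T : Set α, T ⊆ S → (S \ T).Nonempty → ¬ MonoOn G T →
          HasX9 G S ∨ HasX10 G S ∨ HasX11 G S ∨ HasX12 G S := by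
        intro T hTS hTne hnmT
        have hlt : T.ncard ≤ n := by
          have : T.ncard < S.ncard := by
            refine Set.ncard_lt_ncard ⟨hTS, fun hST => ?_⟩ hfin
            obtain ⟨w, hw⟩ := hTne
            exact hw.2 (hST hw.1)
          omega
        rcases IH T (hfin.subset hTS) hlt hnmT with h | h | h | h
        · exact Or.inl (hasX9_mono hTS h)
        · exact Or.inr (Or.inl (hasX10_mono hTS h))
        · exact Or.inr (Or.inr (Or.inl (hasX11_mono hTS h)))
        · exact Or.inr (Or.inr (Or.inr (hasX12_mono hTS h)))
      by_cases hmC : MonoOn G C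
      · refine recurse (S \ C) Set.diff_subset ?_ ?_
        · obtain ⟨c, hc⟩ := hCne
          exact ⟨c, hCS hc, fun h => h.2 hc⟩
        · intro hmD
          exact hnm (hCD ▸ mono_union hdisj hcr hmC hmD)
      · refine recurse C hCS hDne hmC
    · obtain ⟨C, hCS, hCne, hDne, hcr⟩ := join_split hp4 hfin hconn htwo
      have hCD : C ∪ (S \ C) = S := Set.union_diff_cancel hCS
      have fact1 : ¬(IndepOn G C ∧ ClustOn G (S \ C)) := by
        rintro ⟨hi, hc⟩
        exact hnm ⟨C, hCS, hi, hc⟩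
      have fact2 : ¬(IndepOn G (S \ C) ∧ ClustOn G C) := by
        rintro ⟨hi, hc⟩
        refine hnm ⟨S \ C, Set.diff_subset, hi, ?_⟩
        rwa [Set.diff_diff_cancel_left hCS]
      have memsplit : ∀ x ∈ S, ∀ (A : Set α), x ∉ A → (x ∈ C \ A ∨ x ∈ (S \ C) \ A) := by
        intro x hx A hxA
        by_cases hxC : x ∈ C
        · exact Or.inl ⟨hxC, hxA⟩
        · exact Or.inr ⟨⟨hx, hxC⟩, hxA⟩
      have fact3 : ¬(SplitOn G C ∧ CliqueOn G (S \ C)) := by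
        rintro ⟨⟨A, hAC, hi, hclq⟩, hclQ⟩
        refine hnm ⟨A, hAC.trans hCS, hi, clique_clust ?_⟩
        intro x hx y hy hxy
        rcases memsplit x hx.1 A hx.2 with hx' | hx' <;>
          rcases memsplit y hy.1 A hy.2 with hy' | hy'
        · exact hclq hx' hy' hxy
        · exact hcr x hx'.1 y hy'.1
        · exact (hcr y hy'.1 x hx'.1).symm
        · exact hclQ hx'.1 hy'.1 hxy
      have fact4 : ¬(SplitOn G (S \ C) ∧ CliqueOn G C) := by
        rintro ⟨⟨A, hAD, hi, hclq⟩, hclQ⟩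
        refine hnm ⟨A, hAD.trans Set.diff_subset, hi, clique_clust ?_⟩
        intro x hx y hy hxy
        rcases memsplit x hx.1 A hx.2 with hx' | hx' <;>
          rcases memsplit y hy.1 A hy.2 with hy' | hy'
        · exact hclQ hx'.1 hy'.1 hxy
        · exact hcr x hx'.1 y hy'.1
        · exact (hcr y hy'.1 x hx'.1).symm
        · exact hclq hx' hy' hxy
      by_cases h2C : Has2K1 G C
      · by_cases h2D : Has2K1 G (S \ C)
        · -- both sides have nonedges
          by_cases hP3C : HasP3 G C
          · obtain ⟨x, hx, y, hy, z, hz, hxy, hyz, hnxz, hnexz⟩ := hP3C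
            obtain ⟨u, hu, w, hw, hneuw, hnuw⟩ := h2D
            exact Or.inl ⟨y, hCS hy, x, hCS hx, u, hu.1, z, hCS hz, w, hw.1,
              hcr x hx u hu, (hcr z hz u hu).symm, hcr z hz w hw,
              (hcr x hx w hw).symm, hnxz, hnuw, hnexz, hneuw,
              hxy.symm, hcr y hy u hu, hyz, hcr y hy w hw⟩
          · by_cases hP3D : HasP3 G (S \ C)
            · obtain ⟨x, hx, y, hy, z, hz, hxy, hyz, hnxz, hnexz⟩ := hP3D
              obtain ⟨u, hu, w, hw, hneuw, hnuw⟩ := h2C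
              exact Or.inl ⟨y, hy.1, x, hx.1, u, hCS hu, z, hz.1, w, hCS hw,
                (hcr u hu x hx).symm, hcr u hu z hz, (hcr w hw z hz).symm,
                hcr w hw x hx, hnxz, hnuw, hnexz, hneuw,
                hxy.symm, (hcr u hu y hy).symm, hyz, (hcr w hw y hy).symm⟩
            · have hclC := clust_of_not_hasP3 hP3C
              have hclD := clust_of_not_hasP3 hP3D
              have hK2C : HasK2 G C := by
                apply not_indep_hasK2
                intro hi
                exact fact1 ⟨hi, hclD⟩
              have hK2D : HasK2 G (S \ C) := by
                apply not_indep_hasK2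
                intro hi
                exact fact2 ⟨hi, hclC⟩
              obtain ⟨a, ha, b, hb, c, hc, r1, r2, r3, r4, r5⟩ :=
                clust_k2k1 hclC hK2C h2C
              obtain ⟨d, hd, e, he, f, hf, s1, s2, s3, s4, s5⟩ :=
                clust_k2k1 hclD hK2D h2D
              exact Or.inr (Or.inr (Or.inr ⟨a, hCS ha, b, hCS hb, c, hCS hc,
                d, hd.1, e, he.1, f, hf.1, r1, r2, r3, r4, r5, s1, s2, s3, s4, s5,
                hcr a ha d hd, hcr a ha e he, hcr a ha f hf,
                hcr b hb d hd, hcr b hb e he, hcr b hb f hf,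
                hcr c hc d hd, hcr c hc e he, hcr c hc f hf⟩))
        · -- S \ C is a clique
          have hclD := clique_of_not_has2K1 h2D
          have := cliqueSide hp4 (hfin.subset hCS) hDne hcr hclD fact3 fact2
          rwa [hCD] at this
      · by_cases h2D : Has2K1 G (S \ C)
        · -- C is a clique
          have hclC := clique_of_not_has2K1 h2C
          have := cliqueSide hp4 (hfin.subset Set.diff_subset) hCne
            (fun x hx y hy => (hcr y hy x hx).symm) hclC fact4 fact1
          rwa [Set.union_comm, hCD] at this
        · -- both cliques: S is a clique, hence monopolar
          have hclC := clique_of_not_has2K1 h2C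
          have hclD := clique_of_not_has2K1 h2D
          refine absurd (mono_of_clust (clique_clust ?_)) hnm
          intro x hx y hy hxy
          rcases memsplit x hx ∅ (Set.notMem_empty x) with hx' | hx' <;>
            rcases memsplit y hy ∅ (Set.notMem_empty y) with hy' | hy'
          · exact hclC hx'.1 hy'.1 hxy
          · exact hcr x hx'.1 y hy'.1
          · exact (hcr y hy'.1 x hx'.1).symm
          · exact hclD hx'.1 hy'.1 hxy


variable {α : Type*} {G : SimpleGraph α}

@[simp] theorem gJoin_adj_ll {β γ} {H₁ : SimpleGraph β} {H₂ : SimpleGraph γ} (a b : β) :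
    (gJoin H₁ H₂).Adj (Sum.inl a) (Sum.inl b) ↔ H₁.Adj a b := Iff.rfl
@[simp] theorem gJoin_adj_lr {β γ} {H₁ : SimpleGraph β} {H₂ : SimpleGraph γ} (a : β) (b : γ) :
    (gJoin H₁ H₂).Adj (Sum.inl a) (Sum.inr b) ↔ True := Iff.rfl
@[simp] theorem gJoin_adj_rl {β γ} {H₁ : SimpleGraph β} {H₂ : SimpleGraph γ} (a : γ) (b : β) :
    (gJoin H₁ H₂).Adj (Sum.inr a) (Sum.inl b) ↔ True := Iff.rfl
@[simp] theorem gJoin_adj_rr {β γ} {H₁ : SimpleGraph β} {H₂ : SimpleGraph γ} (a b : γ) :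
    (gJoin H₁ H₂).Adj (Sum.inr a) (Sum.inr b) ↔ H₂.Adj a b := Iff.rfl
@[simp] theorem gUnion_adj_ll {β γ} {H₁ : SimpleGraph β} {H₂ : SimpleGraph γ} (a b : β) :
    (gUnion H₁ H₂).Adj (Sum.inl a) (Sum.inl b) ↔ H₁.Adj a b := Iff.rfl
@[simp] theorem gUnion_adj_lr {β γ} {H₁ : SimpleGraph β} {H₂ : SimpleGraph γ} (a : β) (b : γ) :
    (gUnion H₁ H₂).Adj (Sum.inl a) (Sum.inr b) ↔ False := Iff.rfl
@[simp] theorem gUnion_adj_rl {β γ} {H₁ : SimpleGraph β} {H₂ : SimpleGraph γ} (a : γ) (b : β) :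
    (gUnion H₁ H₂).Adj (Sum.inr a) (Sum.inl b) ↔ False := Iff.rfl
@[simp] theorem gUnion_adj_rr {β γ} {H₁ : SimpleGraph β} {H₂ : SimpleGraph γ} (a b : γ) :
    (gUnion H₁ H₂).Adj (Sum.inr a) (Sum.inr b) ↔ H₂.Adj a b := Iff.rfl

def embJoin {β γ} {H₁ : SimpleGraph β} {H₂ : SimpleGraph γ} (e₁ : H₁ ↪g G) (e₂ : H₂ ↪g G)
    (hd : ∀ x y, e₁ x ≠ e₂ y) (ha : ∀ x y, G.Adj (e₁ x) (e₂ y)) : gJoin H₁ H₂ ↪g G where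
  toFun := Sum.elim e₁ e₂
  inj' := by
    rintro (x | x) (y | y) h <;> simp only [Sum.elim_inl, Sum.elim_inr] at h
    · rw [e₁.injective h]
    · exact absurd h (hd x y)
    · exact absurd h.symm (hd y x)
    · rw [e₂.injective h]
  map_rel_iff' := by
    rintro (x | x) (y | y) <;>
      simp only [Function.Embedding.coeFn_mk, Sum.elim_inl, Sum.elim_inr,
        gJoin_adj_ll, gJoin_adj_lr, gJoin_adj_rl, gJoin_adj_rr, iff_true]
    · exact e₁.map_rel_iff
    · exact ha x y
    · exact (ha y x).symm
    · exact e₂.map_rel_iff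

def embUnion {β γ} {H₁ : SimpleGraph β} {H₂ : SimpleGraph γ} (e₁ : H₁ ↪g G) (e₂ : H₂ ↪g G)
    (hd : ∀ x y, e₁ x ≠ e₂ y) (hn : ∀ x y, ¬ G.Adj (e₁ x) (e₂ y)) : gUnion H₁ H₂ ↪g G where
  toFun := Sum.elim e₁ e₂
  inj' := by
    rintro (x | x) (y | y) h <;> simp only [Sum.elim_inl, Sum.elim_inr] at h
    · rw [e₁.injective h]
    · exact absurd h (hd x y)
    · exact absurd h.symm (hd y x)
    · rw [e₂.injective h]
  map_rel_iff' := by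
    rintro (x | x) (y | y) <;>
      simp only [Function.Embedding.coeFn_mk, Sum.elim_inl, Sum.elim_inr,
        gUnion_adj_ll, gUnion_adj_lr, gUnion_adj_rl, gUnion_adj_rr, iff_false]
    · exact e₁.map_rel_iff
    · exact hn x y
    · exact fun h => hn y x h.symm
    · exact e₂.map_rel_iff

def embK1 (x : α) : KG 1 ↪g G where
  toFun := fun _ => x
  inj' := fun a b _ => Subsingleton.elim a b
  map_rel_iff' := by
    intro a b
    constructor
    · intro h; exact absurd h (G.loopless.irrefl x)
    · intro h; exact absurd (Subsingleton.elim a b) h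

def embK2 {a b : α} (hab : G.Adj a b) : KG 2 ↪g G where
  toFun := fun i => if i = 0 then a else b
  inj' := by
    intro i j h
    fin_cases i <;> fin_cases j <;> simp_all <;>
      first
        | exact absurd h hab.ne
        | exact absurd h.symm hab.ne
  map_rel_iff' := by
    intro i j
    fin_cases i <;> fin_cases j <;> dsimp only [DFunLike.coe] <;>
      simp [KG, hab, hab.symm, G.loopless.irrefl a, G.loopless.irrefl b, Fin.ext_iff]

def embE2 {a b : α} (hne : a ≠ b) (hnadj : ¬ G.Adj a b) : EG 2 ↪g G where
  toFun := fun i => if i = 0 then a else b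
  inj' := by
    intro i j h
    fin_cases i <;> fin_cases j <;> simp_all <;>
      first
        | exact absurd h hne
        | exact absurd h.symm hne
  map_rel_iff' := by
    have hnadj' : ¬ G.Adj b a := fun h => hnadj (G.symm.symm _ _ h)
    intro i j
    fin_cases i <;> fin_cases j <;> dsimp only [DFunLike.coe] <;>
      simp [EG, hnadj, hnadj', G.loopless.irrefl a, G.loopless.irrefl b]

def embK3 {a b c : α} (hab : G.Adj a b) (hac : G.Adj a c) (hbc : G.Adj b c) :
    KG 3 ↪g G where
  toFun := fun i => if i = 0 then a else if i = 1 then b else c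
  inj' := by
    intro i j h
    fin_cases i <;> fin_cases j <;> simp_all <;>
      first
        | exact absurd h hab.ne
        | exact absurd h.symm hab.ne
        | exact absurd h hac.ne
        | exact absurd h.symm hac.ne
        | exact absurd h hbc.ne
        | exact absurd h.symm hbc.ne
  map_rel_iff' := by
    intro i j
    fin_cases i <;> fin_cases j <;> dsimp only [DFunLike.coe] <;>
      simp [KG, hab, hac, hbc, hab.symm, hac.symm, hbc.symm,
        G.loopless.irrefl a, G.loopless.irrefl b, G.loopless.irrefl c, Fin.ext_iff]

def embP3 {x y z : α} (hxy : G.Adj x y) (hyz : G.Adj y z) (hnxz : ¬ G.Adj x z)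
    (hnexz : x ≠ z) : pathGraph 3 ↪g G where
  toFun := fun i => if i = 0 then x else if i = 1 then y else z
  inj' := by
    intro i j h
    fin_cases i <;> fin_cases j <;> simp_all <;>
      first
        | exact absurd h hxy.ne
        | exact absurd h.symm hxy.ne
        | exact absurd h hyz.ne
        | exact absurd h.symm hyz.ne
        | exact absurd h hnexz
        | exact absurd h.symm hnexz
  map_rel_iff' := by
    intro i j
    have hnzx : ¬ G.Adj z x := fun h => hnxz (G.symm.symm _ _ h)
    fin_cases i <;> fin_cases j <;> dsimp only [DFunLike.coe] <;>
      simp [pathGraph_adj, hxy, hyz, hnxz, hnzx, hxy.symm, hyz.symm,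
        G.loopless.irrefl x, G.loopless.irrefl y, G.loopless.irrefl z]

def embC4 {a b c d : α} (hab : G.Adj a b) (hbc : G.Adj b c) (hcd : G.Adj c d)
    (hda : G.Adj d a) (hnac : ¬ G.Adj a c) (hnbd : ¬ G.Adj b d)
    (hneac : a ≠ c) (hnebd : b ≠ d) : cycleGraph 4 ↪g G where
  toFun := fun i => if i = 0 then a else if i = 1 then b else if i = 2 then c else d
  inj' := by
    intro i j h
    fin_cases i <;> fin_cases j <;> simp_all <;>
      first
        | exact absurd h hab.ne
        | exact absurd h.symm hab.ne
        | exact absurd h hbc.ne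
        | exact absurd h.symm hbc.ne
        | exact absurd h hcd.ne
        | exact absurd h.symm hcd.ne
        | exact absurd h.symm hda.ne
        | exact absurd h hda.ne
        | exact absurd h hneac
        | exact absurd h.symm hneac
        | exact absurd h hnebd
        | exact absurd h.symm hnebd
  map_rel_iff' := by
    have hnca : ¬ G.Adj c a := fun h => hnac (G.symm.symm _ _ h)
    have hndb : ¬ G.Adj d b := fun h => hnbd (G.symm.symm _ _ h)
    intro i j
    fin_cases i <;> fin_cases j <;> dsimp only [DFunLike.coe] <;>
      simp [show ∀ u v : Fin 4, (cycleGraph 4).Adj u v ↔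
          (u = 0 ∧ v = 1) ∨ (u = 1 ∧ v = 0) ∨ (u = 1 ∧ v = 2) ∨ (u = 2 ∧ v = 1) ∨
          (u = 2 ∧ v = 3) ∨ (u = 3 ∧ v = 2) ∨ (u = 3 ∧ v = 0) ∨ (u = 0 ∧ v = 3)
        from by decide,
        hab, hbc, hcd, hda, hnac, hnbd, hab.symm, hbc.symm, hcd.symm, hda.symm,
        hnca, hndb,
        G.loopless.irrefl a, G.loopless.irrefl b, G.loopless.irrefl c, G.loopless.irrefl d]


@[simp] theorem embJoin_inl {β γ} {H₁ : SimpleGraph β} {H₂ : SimpleGraph γ}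
    (e₁ : H₁ ↪g G) (e₂ : H₂ ↪g G) (hd) (ha) (x : β) :
    (embJoin e₁ e₂ hd ha) (Sum.inl x) = e₁ x := rfl
@[simp] theorem embJoin_inr {β γ} {H₁ : SimpleGraph β} {H₂ : SimpleGraph γ}
    (e₁ : H₁ ↪g G) (e₂ : H₂ ↪g G) (hd) (ha) (x : γ) :
    (embJoin e₁ e₂ hd ha) (Sum.inr x) = e₂ x := rfl
@[simp] theorem embUnion_inl {β γ} {H₁ : SimpleGraph β} {H₂ : SimpleGraph γ}
    (e₁ : H₁ ↪g G) (e₂ : H₂ ↪g G) (hd) (hn) (x : β) :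
    (embUnion e₁ e₂ hd hn) (Sum.inl x) = e₁ x := rfl
@[simp] theorem embUnion_inr {β γ} {H₁ : SimpleGraph β} {H₂ : SimpleGraph γ}
    (e₁ : H₁ ↪g G) (e₂ : H₂ ↪g G) (hd) (hn) (x : γ) :
    (embUnion e₁ e₂ hd hn) (Sum.inr x) = e₂ x := rfl
@[simp] theorem embK1_apply (x : α) (i : Fin 1) : (embK1 (G := G) x) i = x := rfl
@[simp] theorem embK2_apply {a b : α} (hab : G.Adj a b) (i : Fin 2) :
    (embK2 hab) i = if i = 0 then a else b := rfl
@[simp] theorem embE2_apply {a b : α} (hne : a ≠ b) (hnadj : ¬ G.Adj a b) (i : Fin 2) :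
    (embE2 hne hnadj) i = if i = 0 then a else b := rfl
@[simp] theorem embK3_apply {a b c : α} (hab : G.Adj a b) (hac : G.Adj a c)
    (hbc : G.Adj b c) (i : Fin 3) :
    (embK3 hab hac hbc) i = if i = 0 then a else if i = 1 then b else c := rfl
@[simp] theorem embP3_apply {x y z : α} (hxy : G.Adj x y) (hyz : G.Adj y z)
    (hnxz : ¬ G.Adj x z) (hnexz : x ≠ z) (i : Fin 3) :
    (embP3 hxy hyz hnxz hnexz) i = if i = 0 then x else if i = 1 then y else z := rfl
@[simp] theorem embC4_apply {a b c d : α} (hab : G.Adj a b) (hbc : G.Adj b c)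
    (hcd : G.Adj c d) (hda : G.Adj d a) (hnac : ¬ G.Adj a c) (hnbd : ¬ G.Adj b d)
    (hneac : a ≠ c) (hnebd : b ≠ d) (i : Fin 4) :
    (embC4 hab hbc hcd hda hnac hnbd hneac hnebd) i =
      if i = 0 then a else if i = 1 then b else if i = 2 then c else d := rfl


set_option maxHeartbeats 1000000 in
theorem mkH9 {v t1 t2 t3 h' a b c d : α}
    (ht12 : G.Adj t1 t2) (ht13 : G.Adj t1 t3) (ht23 : G.Adj t2 t3)
    (hab : G.Adj a b) (hbc : G.Adj b c) (hcd : G.Adj c d) (hda : G.Adj d a)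
    (hnac : ¬ G.Adj a c) (hnbd : ¬ G.Adj b d) (hneac : a ≠ c) (hnebd : b ≠ d)
    (hha : G.Adj h' a) (hhb : G.Adj h' b) (hhc : G.Adj h' c) (hhd : G.Adj h' d)
    (hcr : ∀ s ∈ ({t1, t2, t3} : Set α), ∀ u ∈ ({h', a, b, c, d} : Set α),
      ¬ G.Adj s u ∧ s ≠ u)
    (hva : ∀ u ∈ ({t1, t2, t3, h', a, b, c, d} : Set α), G.Adj v u) :
    Contains G H9 := by
  have eC4 := embC4 hab hbc hcd hda hnac hnbd hneac hnebd
  have eH := embK1 (G := G) h'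
  have e3 := embK3 ht12 ht13 ht23
  have eV := embK1 (G := G) v
  have hd1 : ∀ (x : Fin 4) (y : Fin 1),
      (embC4 hab hbc hcd hda hnac hnbd hneac hnebd) x ≠ (embK1 (G := G) h') y := by
    intro x y
    fin_cases x <;> simp <;>
      first
        | exact hha.ne.symm
        | exact hhb.ne.symm
        | exact hhc.ne.symm
        | exact hhd.ne.symm
  have ha1 : ∀ (x : Fin 4) (y : Fin 1),
      G.Adj ((embC4 hab hbc hcd hda hnac hnbd hneac hnebd) x) ((embK1 (G := G) h') y) := by
    intro x y
    fin_cases x <;> simp <;>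
      first
        | exact hha.symm
        | exact hhb.symm
        | exact hhc.symm
        | exact hhd.symm
  have hcr' : ∀ (x : Fin 3) (u : α), u ∈ ({h', a, b, c, d} : Set α) →
      ¬ G.Adj ((embK3 ht12 ht13 ht23) x) u ∧ (embK3 ht12 ht13 ht23) x ≠ u := by
    intro x u hu
    fin_cases x <;> simp
    · exact hcr t1 (by simp) u hu
    · exact hcr t2 (by simp) u hu
    · exact hcr t3 (by simp) u hu
  have hmem : ∀ (y : Fin 4 ⊕ Fin 1),
      (embJoin (embC4 hab hbc hcd hda hnac hnbd hneac hnebd) (embK1 (G := G) h') hd1 ha1) y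
        ∈ ({h', a, b, c, d} : Set α) := by
    rintro (y | y)
    · fin_cases y <;> simp
    · simp
  have hd2 : ∀ (x : Fin 3) (y : Fin 4 ⊕ Fin 1),
      (embK3 ht12 ht13 ht23) x ≠
      (embJoin (embC4 hab hbc hcd hda hnac hnbd hneac hnebd) (embK1 (G := G) h') hd1 ha1) y :=
    fun x y => (hcr' x _ (hmem y)).2
  have hn2 : ∀ (x : Fin 3) (y : Fin 4 ⊕ Fin 1),
      ¬ G.Adj ((embK3 ht12 ht13 ht23) x)
        ((embJoin (embC4 hab hbc hcd hda hnac hnbd hneac hnebd) (embK1 (G := G) h') hd1 ha1) y) :=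
    fun x y => (hcr' x _ (hmem y)).1
  have hmem2 : ∀ (y : Fin 3 ⊕ (Fin 4 ⊕ Fin 1)),
      (embUnion (embK3 ht12 ht13 ht23)
        (embJoin (embC4 hab hbc hcd hda hnac hnbd hneac hnebd) (embK1 (G := G) h') hd1 ha1)
        hd2 hn2) y ∈ ({t1, t2, t3, h', a, b, c, d} : Set α) := by
    rintro (y | (y | y))
    · fin_cases y <;> simp
    · fin_cases y <;> simp
    · simp
  have hd3 : ∀ (x : Fin 1) (y : Fin 3 ⊕ (Fin 4 ⊕ Fin 1)),
      (embK1 (G := G) v) x ≠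
      (embUnion (embK3 ht12 ht13 ht23)
        (embJoin (embC4 hab hbc hcd hda hnac hnbd hneac hnebd) (embK1 (G := G) h') hd1 ha1)
        hd2 hn2) y := by
    intro x y
    simp only [embK1_apply]
    exact (hva _ (hmem2 y)).ne
  have ha3 : ∀ (x : Fin 1) (y : Fin 3 ⊕ (Fin 4 ⊕ Fin 1)),
      G.Adj ((embK1 (G := G) v) x)
      ((embUnion (embK3 ht12 ht13 ht23)
        (embJoin (embC4 hab hbc hcd hda hnac hnbd hneac hnebd) (embK1 (G := G) h') hd1 ha1)
        hd2 hn2) y) := by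
    intro x y
    simp only [embK1_apply]
    exact hva _ (hmem2 y)
  exact ⟨embJoin (embK1 (G := G) v) (embUnion (embK3 ht12 ht13 ht23)
      (embJoin (embC4 hab hbc hcd hda hnac hnbd hneac hnebd) (embK1 (G := G) h') hd1 ha1)
      hd2 hn2) hd3 ha3⟩

set_option maxHeartbeats 1000000 in
theorem mkH10 {v t1 t2 t3 h' x y z e f : α}
    (ht12 : G.Adj t1 t2) (ht13 : G.Adj t1 t3) (ht23 : G.Adj t2 t3)
    (hxy : G.Adj x y) (hyz : G.Adj y z) (hnxz : ¬ G.Adj x z) (hnexz : x ≠ z)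
    (hef : G.Adj e f)
    (hnxe : ¬ G.Adj x e) (hnxf : ¬ G.Adj x f) (hnye : ¬ G.Adj y e) (hnyf : ¬ G.Adj y f)
    (hnze : ¬ G.Adj z e) (hnzf : ¬ G.Adj z f)
    (hnexe : x ≠ e) (hnexf : x ≠ f) (hneye : y ≠ e) (hneyf : y ≠ f)
    (hneze : z ≠ e) (hnezf : z ≠ f)
    (hhx : G.Adj h' x) (hhy : G.Adj h' y) (hhz : G.Adj h' z)
    (hhe : G.Adj h' e) (hhf : G.Adj h' f)
    (hcr : ∀ s ∈ ({t1, t2, t3} : Set α), ∀ u ∈ ({h', x, y, z, e, f} : Set α),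
      ¬ G.Adj s u ∧ s ≠ u)
    (hva : ∀ u ∈ ({t1, t2, t3, h', x, y, z, e, f} : Set α), G.Adj v u) :
    Contains G H10 := by
  have hd0 : ∀ (i : Fin 3) (j : Fin 2),
      (embP3 hxy hyz hnxz hnexz) i ≠ (embK2 hef) j := by
    intro i j
    fin_cases i <;> fin_cases j <;> simp <;> assumption
  have hn0 : ∀ (i : Fin 3) (j : Fin 2),
      ¬ G.Adj ((embP3 hxy hyz hnxz hnexz) i) ((embK2 hef) j) := by
    intro i j
    fin_cases i <;> fin_cases j <;> simp <;> assumption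
  have hmem0 : ∀ (i : Fin 3 ⊕ Fin 2),
      (embUnion (embP3 hxy hyz hnxz hnexz) (embK2 hef) hd0 hn0) i
        ∈ ({x, y, z, e, f} : Set α) := by
    rintro (i | i) <;> fin_cases i <;> simp
  have hd1 : ∀ (i : Fin 1) (j : Fin 3 ⊕ Fin 2),
      (embK1 (G := G) h') i ≠
      (embUnion (embP3 hxy hyz hnxz hnexz) (embK2 hef) hd0 hn0) j := by
    intro i j
    simp only [embK1_apply]
    rcases hmem0 j with h | h | h | h | h <;> rw [h]
    · exact hhx.ne
    · exact hhy.ne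
    · exact hhz.ne
    · exact hhe.ne
    · exact hhf.ne
  have ha1 : ∀ (i : Fin 1) (j : Fin 3 ⊕ Fin 2),
      G.Adj ((embK1 (G := G) h') i)
      ((embUnion (embP3 hxy hyz hnxz hnexz) (embK2 hef) hd0 hn0) j) := by
    intro i j
    simp only [embK1_apply]
    rcases hmem0 j with h | h | h | h | h <;> rw [h] <;> assumption
  have hmem1 : ∀ (j : Fin 1 ⊕ (Fin 3 ⊕ Fin 2)),
      (embJoin (embK1 (G := G) h')
        (embUnion (embP3 hxy hyz hnxz hnexz) (embK2 hef) hd0 hn0) hd1 ha1) j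
        ∈ ({h', x, y, z, e, f} : Set α) := by
    rintro (j | j)
    · simp
    · have := hmem0 j
      rw [show (embJoin (embK1 (G := G) h')
        (embUnion (embP3 hxy hyz hnxz hnexz) (embK2 hef) hd0 hn0) hd1 ha1) (Sum.inr j)
        = (embUnion (embP3 hxy hyz hnxz hnexz) (embK2 hef) hd0 hn0) j from rfl]
      revert this
      simp only [Set.mem_insert_iff, Set.mem_singleton_iff]
      tauto
  have hd2 : ∀ (i : Fin 3) (j : Fin 1 ⊕ (Fin 3 ⊕ Fin 2)),
      (embK3 ht12 ht13 ht23) i ≠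
      (embJoin (embK1 (G := G) h')
        (embUnion (embP3 hxy hyz hnxz hnexz) (embK2 hef) hd0 hn0) hd1 ha1) j := by
    intro i j
    fin_cases i <;> simp
    · exact (hcr t1 (by simp) _ (hmem1 j)).2
    · exact (hcr t2 (by simp) _ (hmem1 j)).2
    · exact (hcr t3 (by simp) _ (hmem1 j)).2
  have hn2 : ∀ (i : Fin 3) (j : Fin 1 ⊕ (Fin 3 ⊕ Fin 2)),
      ¬ G.Adj ((embK3 ht12 ht13 ht23) i)
      ((embJoin (embK1 (G := G) h')
        (embUnion (embP3 hxy hyz hnxz hnexz) (embK2 hef) hd0 hn0) hd1 ha1) j) := by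
    intro i j
    fin_cases i <;> simp
    · exact (hcr t1 (by simp) _ (hmem1 j)).1
    · exact (hcr t2 (by simp) _ (hmem1 j)).1
    · exact (hcr t3 (by simp) _ (hmem1 j)).1
  have hmem2 : ∀ (j : Fin 3 ⊕ (Fin 1 ⊕ (Fin 3 ⊕ Fin 2))),
      (embUnion (embK3 ht12 ht13 ht23)
        (embJoin (embK1 (G := G) h')
          (embUnion (embP3 hxy hyz hnxz hnexz) (embK2 hef) hd0 hn0) hd1 ha1) hd2 hn2) j
        ∈ ({t1, t2, t3, h', x, y, z, e, f} : Set α) := by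
    rintro (j | j)
    · fin_cases j <;> simp
    · have := hmem1 j
      rw [show (embUnion (embK3 ht12 ht13 ht23)
        (embJoin (embK1 (G := G) h')
          (embUnion (embP3 hxy hyz hnxz hnexz) (embK2 hef) hd0 hn0) hd1 ha1) hd2 hn2)
          (Sum.inr j)
        = (embJoin (embK1 (G := G) h')
          (embUnion (embP3 hxy hyz hnxz hnexz) (embK2 hef) hd0 hn0) hd1 ha1) j from rfl]
      revert this
      simp only [Set.mem_insert_iff, Set.mem_singleton_iff]
      tauto
  refine ⟨embJoin (embK1 (G := G) v) (embUnion (embK3 ht12 ht13 ht23)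
      (embJoin (embK1 (G := G) h')
        (embUnion (embP3 hxy hyz hnxz hnexz) (embK2 hef) hd0 hn0) hd1 ha1) hd2 hn2)
      ?_ ?_⟩
  · intro i j
    simp only [embK1_apply]
    exact (hva _ (hmem2 j)).ne
  · intro i j
    simp only [embK1_apply]
    exact hva _ (hmem2 j)

set_option maxHeartbeats 1000000 in
theorem mkH11 {v t1 t2 t3 p q a b c d : α}
    (ht12 : G.Adj t1 t2) (ht13 : G.Adj t1 t3) (ht23 : G.Adj t2 t3)
    (hpq : G.Adj p q)
    (hab : G.Adj a b) (hcd : G.Adj c d)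
    (hnac : ¬ G.Adj a c) (hnad : ¬ G.Adj a d) (hnbc : ¬ G.Adj b c) (hnbd : ¬ G.Adj b d)
    (hneac : a ≠ c) (hnead : a ≠ d) (hnebc : b ≠ c) (hnebd : b ≠ d)
    (hpa : G.Adj p a) (hpb : G.Adj p b) (hpc : G.Adj p c) (hpd : G.Adj p d)
    (hqa : G.Adj q a) (hqb : G.Adj q b) (hqc : G.Adj q c) (hqd : G.Adj q d)
    (hcr : ∀ s ∈ ({t1, t2, t3} : Set α), ∀ u ∈ ({p, q, a, b, c, d} : Set α),
      ¬ G.Adj s u ∧ s ≠ u)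
    (hva : ∀ u ∈ ({t1, t2, t3, p, q, a, b, c, d} : Set α), G.Adj v u) :
    Contains G H11 := by
  have hd0 : ∀ (i j : Fin 2), (embK2 hab) i ≠ (embK2 hcd) j := by
    intro i j
    fin_cases i <;> fin_cases j <;> simp <;> assumption
  have hn0 : ∀ (i j : Fin 2), ¬ G.Adj ((embK2 hab) i) ((embK2 hcd) j) := by
    intro i j
    fin_cases i <;> fin_cases j <;> simp <;> assumption
  have hmem0 : ∀ (i : Fin 2 ⊕ Fin 2),
      (embUnion (embK2 hab) (embK2 hcd) hd0 hn0) i ∈ ({a, b, c, d} : Set α) := by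
    rintro (i | i) <;> fin_cases i <;> simp
  have hd1 : ∀ (i : Fin 2) (j : Fin 2 ⊕ Fin 2),
      (embK2 hpq) i ≠ (embUnion (embK2 hab) (embK2 hcd) hd0 hn0) j := by
    intro i j
    fin_cases i <;> simp <;>
      rcases hmem0 j with h | h | h | h <;> rw [h]
    · exact hpa.ne
    · exact hpb.ne
    · exact hpc.ne
    · exact hpd.ne
    · exact hqa.ne
    · exact hqb.ne
    · exact hqc.ne
    · exact hqd.ne
  have ha1 : ∀ (i : Fin 2) (j : Fin 2 ⊕ Fin 2),
      G.Adj ((embK2 hpq) i) ((embUnion (embK2 hab) (embK2 hcd) hd0 hn0) j) := by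
    intro i j
    fin_cases i <;> simp <;>
      rcases hmem0 j with h | h | h | h <;> rw [h] <;> assumption
  have hmem1 : ∀ (j : Fin 2 ⊕ (Fin 2 ⊕ Fin 2)),
      (embJoin (embK2 hpq) (embUnion (embK2 hab) (embK2 hcd) hd0 hn0) hd1 ha1) j
        ∈ ({p, q, a, b, c, d} : Set α) := by
    rintro (j | j)
    · fin_cases j <;> simp
    · have := hmem0 j
      rw [show (embJoin (embK2 hpq) (embUnion (embK2 hab) (embK2 hcd) hd0 hn0) hd1 ha1)
          (Sum.inr j) = (embUnion (embK2 hab) (embK2 hcd) hd0 hn0) j from rfl]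
      revert this
      simp only [Set.mem_insert_iff, Set.mem_singleton_iff]
      tauto
  have hd2 : ∀ (i : Fin 3) (j : Fin 2 ⊕ (Fin 2 ⊕ Fin 2)),
      (embK3 ht12 ht13 ht23) i ≠
      (embJoin (embK2 hpq) (embUnion (embK2 hab) (embK2 hcd) hd0 hn0) hd1 ha1) j := by
    intro i j
    fin_cases i <;> simp
    · exact (hcr t1 (by simp) _ (hmem1 j)).2
    · exact (hcr t2 (by simp) _ (hmem1 j)).2
    · exact (hcr t3 (by simp) _ (hmem1 j)).2
  have hn2 : ∀ (i : Fin 3) (j : Fin 2 ⊕ (Fin 2 ⊕ Fin 2)),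
      ¬ G.Adj ((embK3 ht12 ht13 ht23) i)
      ((embJoin (embK2 hpq) (embUnion (embK2 hab) (embK2 hcd) hd0 hn0) hd1 ha1) j) := by
    intro i j
    fin_cases i <;> simp
    · exact (hcr t1 (by simp) _ (hmem1 j)).1
    · exact (hcr t2 (by simp) _ (hmem1 j)).1
    · exact (hcr t3 (by simp) _ (hmem1 j)).1
  have hmem2 : ∀ (j : Fin 3 ⊕ (Fin 2 ⊕ (Fin 2 ⊕ Fin 2))),
      (embUnion (embK3 ht12 ht13 ht23)
        (embJoin (embK2 hpq) (embUnion (embK2 hab) (embK2 hcd) hd0 hn0) hd1 ha1) hd2 hn2) j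
        ∈ ({t1, t2, t3, p, q, a, b, c, d} : Set α) := by
    rintro (j | j)
    · fin_cases j <;> simp
    · have := hmem1 j
      rw [show (embUnion (embK3 ht12 ht13 ht23)
        (embJoin (embK2 hpq) (embUnion (embK2 hab) (embK2 hcd) hd0 hn0) hd1 ha1) hd2 hn2)
          (Sum.inr j)
        = (embJoin (embK2 hpq) (embUnion (embK2 hab) (embK2 hcd) hd0 hn0) hd1 ha1) j from rfl]
      revert this
      simp only [Set.mem_insert_iff, Set.mem_singleton_iff]
      tauto
  refine ⟨embJoin (embK1 (G := G) v) (embUnion (embK3 ht12 ht13 ht23)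
      (embJoin (embK2 hpq) (embUnion (embK2 hab) (embK2 hcd) hd0 hn0) hd1 ha1) hd2 hn2)
      ?_ ?_⟩
  · intro i j
    simp only [embK1_apply]
    exact (hva _ (hmem2 j)).ne
  · intro i j
    simp only [embK1_apply]
    exact hva _ (hmem2 j)

set_option maxHeartbeats 1000000 in
theorem mkH12 {v t1 t2 t3 a b c d e f : α}
    (ht12 : G.Adj t1 t2) (ht13 : G.Adj t1 t3) (ht23 : G.Adj t2 t3)
    (hab : G.Adj a b) (hnac : ¬ G.Adj a c) (hnbc : ¬ G.Adj b c)
    (hneac : a ≠ c) (hnebc : b ≠ c)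
    (hde : G.Adj d e) (hndf : ¬ G.Adj d f) (hnef : ¬ G.Adj e f)
    (hnedf : d ≠ f) (hneef : e ≠ f)
    (had : G.Adj a d) (hae : G.Adj a e) (haf : G.Adj a f)
    (hbd : G.Adj b d) (hbe : G.Adj b e) (hbf : G.Adj b f)
    (hcd : G.Adj c d) (hce : G.Adj c e) (hcf : G.Adj c f)
    (hcr : ∀ s ∈ ({t1, t2, t3} : Set α), ∀ u ∈ ({a, b, c, d, e, f} : Set α),
      ¬ G.Adj s u ∧ s ≠ u)
    (hva : ∀ u ∈ ({t1, t2, t3, a, b, c, d, e, f} : Set α), G.Adj v u) :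
    Contains G H12 := by
  have hd0 : ∀ (i : Fin 2) (j : Fin 1), (embK2 hab) i ≠ (embK1 (G := G) c) j := by
    intro i j
    fin_cases i <;> simp <;> assumption
  have hn0 : ∀ (i : Fin 2) (j : Fin 1),
      ¬ G.Adj ((embK2 hab) i) ((embK1 (G := G) c) j) := by
    intro i j
    fin_cases i <;> simp <;> assumption
  have hd0' : ∀ (i : Fin 2) (j : Fin 1), (embK2 hde) i ≠ (embK1 (G := G) f) j := by
    intro i j
    fin_cases i <;> simp <;> assumption
  have hn0' : ∀ (i : Fin 2) (j : Fin 1),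
      ¬ G.Adj ((embK2 hde) i) ((embK1 (G := G) f) j) := by
    intro i j
    fin_cases i <;> simp <;> assumption
  have hmemL : ∀ (i : Fin 2 ⊕ Fin 1),
      (embUnion (embK2 hab) (embK1 (G := G) c) hd0 hn0) i ∈ ({a, b, c} : Set α) := by
    rintro (i | i) <;> fin_cases i <;> simp
  have hmemR : ∀ (i : Fin 2 ⊕ Fin 1),
      (embUnion (embK2 hde) (embK1 (G := G) f) hd0' hn0') i ∈ ({d, e, f} : Set α) := by
    rintro (i | i) <;> fin_cases i <;> simp
  have hd1 : ∀ (i j : Fin 2 ⊕ Fin 1),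
      (embUnion (embK2 hab) (embK1 (G := G) c) hd0 hn0) i ≠
      (embUnion (embK2 hde) (embK1 (G := G) f) hd0' hn0') j := by
    intro i j
    rcases hmemL i with h | h | h <;> rcases hmemR j with h' | h' | h' <;> rw [h, h']
    · exact had.ne
    · exact hae.ne
    · exact haf.ne
    · exact hbd.ne
    · exact hbe.ne
    · exact hbf.ne
    · exact hcd.ne
    · exact hce.ne
    · exact hcf.ne
  have ha1 : ∀ (i j : Fin 2 ⊕ Fin 1),
      G.Adj ((embUnion (embK2 hab) (embK1 (G := G) c) hd0 hn0) i)
      ((embUnion (embK2 hde) (embK1 (G := G) f) hd0' hn0') j) := by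
    intro i j
    rcases hmemL i with h | h | h <;> rcases hmemR j with h' | h' | h' <;>
      rw [h, h'] <;> assumption
  have hmem1 : ∀ (j : (Fin 2 ⊕ Fin 1) ⊕ (Fin 2 ⊕ Fin 1)),
      (embJoin (embUnion (embK2 hab) (embK1 (G := G) c) hd0 hn0)
        (embUnion (embK2 hde) (embK1 (G := G) f) hd0' hn0') hd1 ha1) j
        ∈ ({a, b, c, d, e, f} : Set α) := by
    rintro (j | j)
    · have := hmemL j
      rw [show (embJoin (embUnion (embK2 hab) (embK1 (G := G) c) hd0 hn0)
        (embUnion (embK2 hde) (embK1 (G := G) f) hd0' hn0') hd1 ha1) (Sum.inl j)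
        = (embUnion (embK2 hab) (embK1 (G := G) c) hd0 hn0) j from rfl]
      revert this
      simp only [Set.mem_insert_iff, Set.mem_singleton_iff]
      tauto
    · have := hmemR j
      rw [show (embJoin (embUnion (embK2 hab) (embK1 (G := G) c) hd0 hn0)
        (embUnion (embK2 hde) (embK1 (G := G) f) hd0' hn0') hd1 ha1) (Sum.inr j)
        = (embUnion (embK2 hde) (embK1 (G := G) f) hd0' hn0') j from rfl]
      revert this
      simp only [Set.mem_insert_iff, Set.mem_singleton_iff]
      tauto
  have hd2 : ∀ (i : Fin 3) (j : (Fin 2 ⊕ Fin 1) ⊕ (Fin 2 ⊕ Fin 1)),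
      (embK3 ht12 ht13 ht23) i ≠
      (embJoin (embUnion (embK2 hab) (embK1 (G := G) c) hd0 hn0)
        (embUnion (embK2 hde) (embK1 (G := G) f) hd0' hn0') hd1 ha1) j := by
    intro i j
    fin_cases i <;> simp
    · exact (hcr t1 (by simp) _ (hmem1 j)).2
    · exact (hcr t2 (by simp) _ (hmem1 j)).2
    · exact (hcr t3 (by simp) _ (hmem1 j)).2
  have hn2 : ∀ (i : Fin 3) (j : (Fin 2 ⊕ Fin 1) ⊕ (Fin 2 ⊕ Fin 1)),
      ¬ G.Adj ((embK3 ht12 ht13 ht23) i)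
      ((embJoin (embUnion (embK2 hab) (embK1 (G := G) c) hd0 hn0)
        (embUnion (embK2 hde) (embK1 (G := G) f) hd0' hn0') hd1 ha1) j) := by
    intro i j
    fin_cases i <;> simp
    · exact (hcr t1 (by simp) _ (hmem1 j)).1
    · exact (hcr t2 (by simp) _ (hmem1 j)).1
    · exact (hcr t3 (by simp) _ (hmem1 j)).1
  have hmem2 : ∀ (j : Fin 3 ⊕ ((Fin 2 ⊕ Fin 1) ⊕ (Fin 2 ⊕ Fin 1))),
      (embUnion (embK3 ht12 ht13 ht23)
        (embJoin (embUnion (embK2 hab) (embK1 (G := G) c) hd0 hn0)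
          (embUnion (embK2 hde) (embK1 (G := G) f) hd0' hn0') hd1 ha1) hd2 hn2) j
        ∈ ({t1, t2, t3, a, b, c, d, e, f} : Set α) := by
    rintro (j | j)
    · fin_cases j <;> simp
    · have := hmem1 j
      rw [show (embUnion (embK3 ht12 ht13 ht23)
        (embJoin (embUnion (embK2 hab) (embK1 (G := G) c) hd0 hn0)
          (embUnion (embK2 hde) (embK1 (G := G) f) hd0' hn0') hd1 ha1) hd2 hn2) (Sum.inr j)
        = (embJoin (embUnion (embK2 hab) (embK1 (G := G) c) hd0 hn0)
          (embUnion (embK2 hde) (embK1 (G := G) f) hd0' hn0') hd1 ha1) j from rfl]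
      revert this
      simp only [Set.mem_insert_iff, Set.mem_singleton_iff]
      tauto
  refine ⟨embJoin (embK1 (G := G) v) (embUnion (embK3 ht12 ht13 ht23)
      (embJoin (embUnion (embK2 hab) (embK1 (G := G) c) hd0 hn0)
        (embUnion (embK2 hde) (embK1 (G := G) f) hd0' hn0') hd1 ha1) hd2 hn2) ?_ ?_⟩
  · intro i j
    simp only [embK1_apply]
    exact (hva _ (hmem2 j)).ne
  · intro i j
    simp only [embK1_apply]
    exact hva _ (hmem2 j)


def embP4 {a b c d : α} (hab : G.Adj a b) (hbc : G.Adj b c) (hcd : G.Adj c d)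
    (hnac : ¬ G.Adj a c) (hnbd : ¬ G.Adj b d) (hnad : ¬ G.Adj a d)
    (hneac : a ≠ c) (hnebd : b ≠ d) (hnead : a ≠ d) : pathGraph 4 ↪g G where
  toFun := fun i => if i = 0 then a else if i = 1 then b else if i = 2 then c else d
  inj' := by
    intro i j h
    fin_cases i <;> fin_cases j <;> simp_all <;>
      first
        | exact absurd h hab.ne
        | exact absurd h.symm hab.ne
        | exact absurd h hbc.ne
        | exact absurd h.symm hbc.ne
        | exact absurd h hcd.ne
        | exact absurd h.symm hcd.ne
        | exact absurd h hneac
        | exact absurd h.symm hneac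
        | exact absurd h hnebd
        | exact absurd h.symm hnebd
        | exact absurd h hnead
        | exact absurd h.symm hnead
  map_rel_iff' := by
    have h1 : ¬ G.Adj c a := fun h => hnac (G.symm.symm _ _ h)
    have h2 : ¬ G.Adj d b := fun h => hnbd (G.symm.symm _ _ h)
    have h3 : ¬ G.Adj d a := fun h => hnad (G.symm.symm _ _ h)
    intro i j
    fin_cases i <;> fin_cases j <;> dsimp only [DFunLike.coe] <;>
      simp [pathGraph_adj, hab, hbc, hcd, hnac, hnbd, hnad, h1, h2, h3,
        hab.symm, hbc.symm, hcd.symm,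
        G.loopless.irrefl a, G.loopless.irrefl b, G.loopless.irrefl c, G.loopless.irrefl d] <;> decide

theorem p4f_of_no_p4 (h : ¬ Nonempty (pathGraph 4 ↪g G)) : P4F G := by
  intro a b c d hab hbc hcd hnac hnbd hnad hneac hnebd hnead
  exact h ⟨embP4 hab hbc hcd hnac hnbd hnad hneac hnebd hnead⟩

theorem reach_reachable {s : Set α} {x y : α} (h : Reach G s x y) (hx : x ∈ s) :
    ∀ hy : y ∈ s, (G.induce s).Reachable ⟨x, hx⟩ ⟨y, hy⟩ := by
  induction h with
  | refl => exact fun hy => Reachable.refl _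
  | @tail b c hxb hbc ih =>
    intro hc
    obtain ⟨hbS, hcS, hadj⟩ := hbc
    exact (ih hbS).trans (Adj.reachable (by exact hadj))

theorem split_of_not_connected {s : Set α} (h : ¬ (G.induce s).Connected)
    (hne : s.Nonempty) :
    ∃ C ⊆ s, C.Nonempty ∧ (s \ C).Nonempty ∧ ∀ x ∈ C, ∀ y ∈ s \ C, ¬ G.Adj x y := by
  apply not_conn_split
  intro hconn
  apply h
  rw [connected_iff]
  refine ⟨?_, ?_⟩
  · rintro ⟨u, hu⟩ ⟨w, hw⟩
    exact reach_reachable (hconn hu hw) hu hw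
  · exact ⟨⟨hne.choose, hne.choose_spec⟩⟩

theorem partitionable_of {B : Set α} (hTF : TFOn G B) (hCl : ClustOn G Bᶜ) :
    Partitionable G := by
  classical
  refine ⟨B, ?_, ?_⟩
  · intro t ht
    rw [SimpleGraph.is3Clique_iff] at ht
    obtain ⟨x, y, z, hxy, hxz, hyz, -⟩ := ht
    exact hTF x.2 y.2 z.2 hxy hyz hxz
  · rintro ⟨e⟩
    have h01 : G.Adj (e 0).1 (e 1).1 := e.map_rel_iff.mpr (by rw [pathGraph_adj]; decide)
    have h12 : G.Adj (e 1).1 (e 2).1 := e.map_rel_iff.mpr (by rw [pathGraph_adj]; decide)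
    have hn02 : ¬ G.Adj (e 0).1 (e 2).1 := fun h =>
      (by rw [pathGraph_adj]; decide : ¬ (pathGraph 3).Adj 0 2) (e.map_rel_iff.mp h)
    have hne : (e 0).1 ≠ (e 2).1 := fun h =>
      (by decide : ¬ (0 : Fin 3) = 2) (e.injective (Subtype.ext h))
    exact hn02 (hCl (e 0).2 (e 1).2 (e 2).2 h01 h12 hne)

theorem partitionable_induce {A : Set α} (h : Partitionable (G.induce A)) :
    ∃ B ⊆ A, TFOn G B ∧ ClustOn G (A \ B) := by
  classical
  obtain ⟨A₀, h3, hp3⟩ := h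
  refine ⟨{x | ∃ hx : x ∈ A, (⟨x, hx⟩ : ↑A) ∈ A₀}, fun x hx => hx.1, ?_, ?_⟩
  · rintro x ⟨hxA, hx0⟩ y ⟨hyA, hy0⟩ z ⟨hzA, hz0⟩ hxy hyz hxz
    refine h3 {⟨⟨x, hxA⟩, hx0⟩, ⟨⟨y, hyA⟩, hy0⟩, ⟨⟨z, hzA⟩, hz0⟩} ?_
    rw [SimpleGraph.is3Clique_triple_iff]
    exact ⟨hxy, hxz, hyz⟩
  · rintro x ⟨hxA, hxB⟩ y ⟨hyA, hyB⟩ z ⟨hzA, hzB⟩ hxy hyz hxz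
    by_contra hn
    have hx0 : (⟨x, hxA⟩ : ↑A) ∈ A₀ᶜ := fun hc => hxB ⟨hxA, hc⟩
    have hy0 : (⟨y, hyA⟩ : ↑A) ∈ A₀ᶜ := fun hc => hyB ⟨hyA, hc⟩
    have hz0 : (⟨z, hzA⟩ : ↑A) ∈ A₀ᶜ := fun hc => hzB ⟨hzA, hc⟩
    refine hp3 ⟨embP3 (G := (G.induce A).induce A₀ᶜ)
      (x := ⟨⟨x, hxA⟩, hx0⟩) (y := ⟨⟨y, hyA⟩, hy0⟩) (z := ⟨⟨z, hzA⟩, hz0⟩)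
      hxy hyz (fun hc => hn hc) (fun hc => hxz (congrArg (fun w => w.1.1) hc))⟩

theorem assemble [Fintype α] {v : α} (hp4 : P4F G)
    (hv : ∀ w, w ≠ v → G.Adj v w)
    (hnp : ¬ Partitionable G)
    (hmin : ∀ A : Set α, A ≠ Set.univ → Partitionable (G.induce A))
    {S T : Set α} (hST : S ∪ T = {v}ᶜ) (hdisj : Disjoint S T)
    (hcross : ∀ s ∈ S, ∀ t ∈ T, ¬ G.Adj s t) (hSne : S.Nonempty)
    (hnmT : ¬ MonoOn G T) :
    Contains G H9 ∨ Contains G H10 ∨ Contains G H11 ∨ Contains G H12 := by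
  have hSW : ∀ s ∈ S, s ≠ v := by
    intro s hs
    have : s ∈ ({v}ᶜ : Set α) := hST ▸ Set.mem_union_left _ hs
    simpa using this
  have hTW : ∀ t ∈ T, t ≠ v := by
    intro t ht
    have : t ∈ ({v}ᶜ : Set α) := hST ▸ Set.mem_union_right _ ht
    simpa using this
  have hvS : v ∉ S := fun h => hSW v h rfl
  have hvT : v ∉ T := fun h => hTW v h rfl
  have hScomp : ∀ z, z ∈ Sᶜ ↔ z = v ∨ z ∈ T := by
    intro z
    constructor
    · intro hz
      by_cases hzv : z = v
      · exact Or.inl hzv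
      · have : z ∈ S ∪ T := by rw [hST]; simpa using hzv
        rcases this with h | h
        · exact absurd h hz
        · exact Or.inr h
    · rintro (rfl | hz)
      · exact hvS
      · exact fun hzS => (Set.disjoint_left.mp hdisj hzS) hz
  -- triangle extraction in S
  have hAne : Sᶜ ≠ Set.univ := by
    obtain ⟨s, hs⟩ := hSne
    intro h
    have : s ∈ Sᶜ := h ▸ Set.mem_univ s
    exact this hs
  obtain ⟨B, hBsub, hTFB, hClB⟩ := partitionable_induce (hmin Sᶜ hAne)
  have hvSc : v ∈ Sᶜ := hvS
  have htri : ∃ x ∈ S, ∃ y ∈ S, ∃ z ∈ S, G.Adj x y ∧ G.Adj y z ∧ G.Adj x z := by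
    by_cases hvB : v ∈ B
    · -- B \ {v} independent; T is monopolar, contradiction
      exfalso
      have hBT : B \ {v} ⊆ T := by
        rintro z ⟨hzB, hzv⟩
        rcases (hScomp z).mp (hBsub hzB) with rfl | h
        · exact absurd rfl hzv
        · exact h
      refine hnmT ⟨B \ {v}, hBT, ?_, ?_⟩
      · rintro x ⟨hxB, hxv⟩ y ⟨hyB, hyv⟩ hadj
        exact hTFB hxB hvB hyB (hv x hxv).symm (hv y hyv) hadj
      · refine clust_anti ?_ hClB
        rintro z ⟨hzT, hzB⟩
        refine ⟨(hScomp z).mpr (Or.inr hzT), fun hc => hzB ⟨hc, hTW z hzT⟩⟩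
    · have hK : CliqueOn G ((Sᶜ \ B) \ {v}) := by
        rintro x ⟨hx, hxv⟩ y ⟨hy, hyv⟩ hxy
        exact hClB hx ⟨hvSc, hvB⟩ hy (hv x hxv).symm (hv y hyv) hxy
      by_contra hntri
      push_neg at hntri
      apply hnp
      have hBT : B ⊆ T := by
        intro z hz
        rcases (hScomp z).mp (hBsub hz) with rfl | h
        · exact absurd hz hvB
        · exact h
      refine partitionable_of (B := B ∪ S) ?_ ?_
      · have memcase : ∀ w ∈ B ∪ S, w ∈ B ∨ w ∈ S := fun w hw => hw
        intro x hx y hy z hz hxy hyz hxz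
        have hside : ∀ p q, p ∈ B ∪ S → q ∈ B ∪ S → G.Adj p q →
            ((p ∈ B ∧ q ∈ B) ∨ (p ∈ S ∧ q ∈ S)) := by
          intro p q hp hq hpq
          rcases memcase p hp with hp' | hp' <;> rcases memcase q hq with hq' | hq'
          · exact Or.inl ⟨hp', hq'⟩
          · exact absurd hpq.symm (hcross q hq' p (hBT hp'))
          · exact absurd hpq (hcross p hp' q (hBT hq'))
          · exact Or.inr ⟨hp', hq'⟩
        rcases hside x y hx hy hxy with ⟨hx', hy'⟩ | ⟨hx', hy'⟩ <;>
          rcases hside y z hy hz hyz with ⟨hy'', hz'⟩ | ⟨hy'', hz'⟩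
        · exact hTFB hx' hy' hz' hxy hyz hxz
        · exact (Set.disjoint_left.mp hdisj hy'') (hBT hy')
        · exact (Set.disjoint_left.mp hdisj hy') (hBT hy'')
        · exact hntri x hx' y hy' z hz' hxy hyz hxz
      · have hsub : (B ∪ S)ᶜ ⊆ ((Sᶜ \ B) \ {v}) ∪ {v} := by
          intro z hz
          rw [Set.mem_union]
          by_cases hzv : z = v
          · exact Or.inr hzv
          · exact Or.inl ⟨⟨fun hc => hz (Or.inr hc), fun hc => hz (Or.inl hc)⟩, hzv⟩
        refine clust_anti hsub (clique_clust ?_)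
        rintro x hx y hy hxy
        rcases hx with hx | hx <;> rcases hy with hy | hy
        · exact hK hx hy hxy
        · rw [Set.mem_singleton_iff] at hy
          subst hy
          exact (hv x hx.2).symm
        · rw [Set.mem_singleton_iff] at hx
          subst hx
          exact hv y hy.2
        · rw [Set.mem_singleton_iff] at hx hy
          exact absurd (hx.trans hy.symm) hxy
  obtain ⟨t1, ht1, t2, ht2, t3, ht3, h12, h23, h13⟩ := htri
  have hXcases := mainClass hp4 T.ncard T (Set.toFinite T) le_rfl hnmT
  have hcrGen : ∀ s ∈ ({t1, t2, t3} : Set α), ∀ u, u ∈ T → ¬ G.Adj s u ∧ s ≠ u := by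
    intro s hs u hu
    have hsS : s ∈ S := by
      rcases hs with rfl | rfl | rfl
      · exact ht1
      · exact ht2
      · exact ht3
    exact ⟨hcross s hsS u hu, fun h => (Set.disjoint_left.mp hdisj hsS) (h ▸ hu)⟩
  have hvaGen : ∀ u, u ∈ S ∪ T → G.Adj v u := by
    intro u hu
    have : u ∈ ({v}ᶜ : Set α) := hST ▸ hu
    exact hv u (by simpa using this)
  rcases hXcases with h | h | h | h
  · obtain ⟨h', hh', a, ha, b, hb, c, hc, d, hd, r1, r2, r3, r4, r5, r6, r7, r8,
      r9, r10, r11, r12⟩ := h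
    refine Or.inl (mkH9 (v := v) h12 h13 h23 r1 r2 r3 r4 r5 r6 r7 r8 r9 r10 r11 r12 ?_ ?_)
    · intro s hs u hu
      refine hcrGen s hs u ?_
      rcases hu with rfl | rfl | rfl | rfl | rfl
      exacts [hh', ha, hb, hc, hd]
    · intro u hu
      refine hvaGen u ?_
      rcases hu with rfl | rfl | rfl | rfl | rfl | rfl | rfl | rfl
      exacts [Or.inl ht1, Or.inl ht2, Or.inl ht3, Or.inr hh', Or.inr ha,
        Or.inr hb, Or.inr hc, Or.inr hd]
  · obtain ⟨h', hh', x, hx, y, hy, z, hz, e, he, f, hf, r1, r2, r3, r4, r5, r6, r7,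
      r8, r9, r10, r11, r12, r13, r14, r15, r16, r17, r18, r19, r20, r21, r22⟩ := h
    refine Or.inr (Or.inl (mkH10 (v := v) h12 h13 h23 r1 r2 r3 r4 r5 r6 r7 r8 r9 r10 r11
      r12 r13 r14 r15 r16 r17 r18 r19 r20 r21 r22 ?_ ?_))
    · intro s hs u hu
      refine hcrGen s hs u ?_
      rcases hu with rfl | rfl | rfl | rfl | rfl | rfl
      exacts [hh', hx, hy, hz, he, hf]
    · intro u hu
      refine hvaGen u ?_
      rcases hu with rfl | rfl | rfl | rfl | rfl | rfl | rfl | rfl | rfl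
      exacts [Or.inl ht1, Or.inl ht2, Or.inl ht3, Or.inr hh', Or.inr hx,
        Or.inr hy, Or.inr hz, Or.inr he, Or.inr hf]
  · obtain ⟨p, hp, q, hq, a, ha, b, hb, c, hc, d, hd, r1, r2, r3, r4, r5, r6, r7,
      r8, r9, r10, r11, r12, r13, r14, r15, r16, r17, r18, r19⟩ := h
    refine Or.inr (Or.inr (Or.inl (mkH11 (v := v) h12 h13 h23 r1 r2 r3 r4 r5 r6 r7 r8 r9
      r10 r11 r12 r13 r14 r15 r16 r17 r18 r19 ?_ ?_)))
    · intro s hs u hu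
      refine hcrGen s hs u ?_
      rcases hu with rfl | rfl | rfl | rfl | rfl | rfl
      exacts [hp, hq, ha, hb, hc, hd]
    · intro u hu
      refine hvaGen u ?_
      rcases hu with rfl | rfl | rfl | rfl | rfl | rfl | rfl | rfl | rfl
      exacts [Or.inl ht1, Or.inl ht2, Or.inl ht3, Or.inr hp, Or.inr hq,
        Or.inr ha, Or.inr hb, Or.inr hc, Or.inr hd]
  · obtain ⟨a, ha, b, hb, c, hc, d, hd, e, he, f, hf, r1, r2, r3, r4, r5, r6, r7,
      r8, r9, r10, r11, r12, r13, r14, r15, r16, r17, r18, r19⟩ := h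
    refine Or.inr (Or.inr (Or.inr (mkH12 (v := v) h12 h13 h23 r1 r2 r3 r4 r5 r6 r7 r8 r9
      r10 r11 r12 r13 r14 r15 r16 r17 r18 r19 ?_ ?_)))
    · intro s hs u hu
      refine hcrGen s hs u ?_
      rcases hu with rfl | rfl | rfl | rfl | rfl | rfl
      exacts [ha, hb, hc, hd, he, hf]
    · intro u hu
      refine hvaGen u ?_
      rcases hu with rfl | rfl | rfl | rfl | rfl | rfl | rfl | rfl | rfl
      exacts [Or.inl ht1, Or.inl ht2, Or.inl ht3, Or.inr ha, Or.inr hb,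
        Or.inr hc, Or.inr hd, Or.inr he, Or.inr hf]

end Aux

theorem stmt_17 {α : Type*} [Fintype α] (G : SimpleGraph α) (hcog : IsCograph G)
    (hnp : ¬ Partitionable G)
    (hmin : ∀ A : Set α, A ≠ Set.univ → Partitionable (G.induce A))
    (v : α) (hv : ∀ w, w ≠ v → G.Adj v w)
    (hdisc : ¬ (G.induce ({v}ᶜ : Set α)).Connected) :
    Contains G H9 ∨ Contains G H10 ∨ Contains G H11 ∨ Contains G H12 := by
  classical
  have hp4 : Aux.P4F G := Aux.p4f_of_no_p4 hcog
  have nonMono : ¬ Aux.MonoOn G ({v}ᶜ : Set α) := by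
    rintro ⟨A, hA, hi, hc⟩
    apply hnp
    refine Aux.partitionable_of (B := A ∪ {v}) ?_ ?_
    · have hmem : ∀ w ∈ A ∪ {v}, w ≠ v → w ∈ A := by
        rintro w (hw | hw) hwv
        · exact hw
        · exact absurd hw hwv
      intro x hx y hy z hz hxy hyz hxz
      by_cases hxv : x = v
      · subst hxv
        exact hi (hmem y hy hxy.ne') (hmem z hz hxz.ne') hyz
      by_cases hyv : y = v
      · subst hyv
        exact hi (hmem x hx hxv) (hmem z hz hyz.ne') hxz
      by_cases hzv : z = v
      · subst hzv
        exact hi (hmem x hx hxv) (hmem y hy hyv) hxy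
      · exact hi (hmem x hx hxv) (hmem y hy hyv) hxy
    · refine Aux.clust_anti ?_ hc
      intro z hz
      refine ⟨?_, fun h => hz (Or.inl h)⟩
      have : z ≠ v := fun h => hz (Or.inr h)
      simpa using this
  by_cases hWne : ({v}ᶜ : Set α).Nonempty
  swap
  · exfalso
    apply nonMono
    rw [Set.not_nonempty_iff_eq_empty] at hWne
    rw [hWne]
    exact Aux.mono_of_clust (fun x hx => absurd hx (Set.notMem_empty x))
  obtain ⟨C, hCW, hCne, hDne, hcross⟩ := Aux.split_of_not_connected hdisc hWne
  have hCD : C ∪ ({v}ᶜ \ C) = ({v}ᶜ : Set α) := Set.union_diff_cancel hCW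
  have hdisj : Disjoint C ({v}ᶜ \ C) := Set.disjoint_sdiff_right
  by_cases hmC : Aux.MonoOn G C
  · have hnmT : ¬ Aux.MonoOn G ({v}ᶜ \ C) := fun h =>
      nonMono (hCD ▸ Aux.mono_union hdisj hcross hmC h)
    exact Aux.assemble hp4 hv hnp hmin hCD hdisj hcross hCne hnmT
  · have hST : ({v}ᶜ \ C) ∪ C = ({v}ᶜ : Set α) := by
      rw [Set.union_comm]; exact hCD
    exact Aux.assemble hp4 hv hnp hmin hST hdisj.symm
      (fun s hs t ht h => hcross t ht s hs h.symm) hDne hmC
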